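/- arXiv:2209.15573 — 7 statements merged into one kernel-verified Lean document; each statement's English description precedes it below -/
import Mathlib

section
/- Let (X, μ) be a measure space with μ finite, let ν denote Lebesgue measure restricted to a compact interval [a,b] ⊆ ℝ, and let x : [a,b] → X be measurable with (ν.map x) ≤ M • μ for some M ≥ 0, so that C_x : L²(μ) → L²(ν), C_x(g) = g ∘ x, is a well-defined bounded linear operator. Let φ_0, …, φ_J ∈ L²(μ), ψ_0, …, ψ_K ∈ L²(ν), and λ ≥ 0. Define the encoder E : L²(μ) → ℝ^{K+1} by E(g)_k = ⟨C_x g, ψ_k⟩, the matrix G ∈ ℝ^{(K+1)×(J+1)} by G_{k,j} = ⟨C_x φ_j, ψ_k⟩, and the decoder D : ℝ^{J+1} → L²(μ) by D(w) = Σ_{j=0}^J w_j φ_j. Assume that for every b ∈ ℝ^{K+1} the problem min_{w ∈ ℝ^{J+1}} ‖G w − b‖ + λ‖w‖ has a unique minimizer, and call it S(b) (for fixed norms on ℝ^{K+1} and ℝ^{J+1}). Then the map P = D ∘ S ∘ E : L²(μ) → L²(μ) satisfies P(P(F)) = P(F) for every F ∈ L²(μ), i.e., P is a projection onto span{φ_0,…,φ_J}.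 -/
set_option autoImplicit false

open MeasureTheory Set

/-- Proposition 2.3, projection property of weak-SINDy: with
`ν` Lebesgue measure on `[a,b]`, `μ` a finite measure, `x : [a,b] → X` measurable with
`ν.map x ≤ M • μ` (so `g ↦ g∘x` is bounded `L²(μ) → L²(ν)`), projection basis
`φ_0,…,φ_J ∈ L²(μ)`, test functions `ψ_0,…,ψ_K ∈ L²(ν)`, encoder
`E(g)_k = ⟨g∘x, ψ_k⟩`, matrix `G_{k,j} = ⟨φ_j∘x, ψ_k⟩`, decoder
`D(w) = Σ_j w_j φ_j`, and solver `S(b)` the unique minimizer of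
`w ↦ ‖G w − b‖ + λ‖w‖` (for fixed norms `na`, `nb`), the map `P = D ∘ S ∘ E`
satisfies `P(P(F)) = P(F)` for every `F ∈ L²(μ)`. -/
theorem weak_SINDy_projection_property
    {X : Type*} [MeasurableSpace X] (μ : Measure X) [IsFiniteMeasure μ]
    (a b : ℝ) (hab : a ≤ b) (x : ℝ → X) (hx : Measurable x)
    (M : ℝ) (hM : 0 ≤ M)
    (hdom : (volume.restrict (Icc a b)).map x ≤ ENNReal.ofReal M • μ)
    {J K : ℕ} (φ : Fin (J + 1) → X → ℝ) (ψ : Fin (K + 1) → ℝ → ℝ)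
    (hφ : ∀ j, MemLp (φ j) 2 μ)
    (hψ : ∀ k, MemLp (ψ k) 2 (volume.restrict (Icc a b)))
    (lam : ℝ) (hlam : 0 ≤ lam)
    (na : (Fin (K + 1) → ℝ) → ℝ) (nb : (Fin (J + 1) → ℝ) → ℝ)
    -- `na` is a norm on ℝ^{K+1}
    (na_nonneg : ∀ v, 0 ≤ na v) (na_eq_zero : ∀ v, na v = 0 ↔ v = 0)
    (na_smul : ∀ (c : ℝ) v, na (c • v) = |c| * na v)
    (na_add : ∀ v u, na (v + u) ≤ na v + na u)
    -- `nb` is a norm on ℝ^{J+1}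
    (nb_nonneg : ∀ w, 0 ≤ nb w) (nb_eq_zero : ∀ w, nb w = 0 ↔ w = 0)
    (nb_smul : ∀ (c : ℝ) w, nb (c • w) = |c| * nb w)
    (nb_add : ∀ w v, nb (w + v) ≤ nb w + nb v)
    -- the encoder `E`, matrix `G` and decoder `D`
    (E : (X → ℝ) → (Fin (K + 1) → ℝ))
    (hE : ∀ g k, E g k = ∫ t in Icc a b, g (x t) * ψ k t)
    (G : Matrix (Fin (K + 1)) (Fin (J + 1)) ℝ)
    (hG : ∀ k j, G k j = ∫ t in Icc a b, φ j (x t) * ψ k t)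
    (D : (Fin (J + 1) → ℝ) → (X → ℝ))
    (hD : ∀ w y, D w y = ∑ j, w j * φ j y)
    -- the solver `S` : `S bv` is the unique minimizer of `w ↦ na (G w − bv) + λ nb w`
    (S : (Fin (K + 1) → ℝ) → (Fin (J + 1) → ℝ))
    (hS : ∀ bv w, na (G.mulVec (S bv) - bv) + lam * nb (S bv) ≤
      na (G.mulVec w - bv) + lam * nb w)
    (hS_uniq : ∀ bv w,
      na (G.mulVec w - bv) + lam * nb w =
        na (G.mulVec (S bv) - bv) + lam * nb (S bv) → w = S bv) :
    ∀ F : X → ℝ, MemLp F 2 μ → D (S (E (D (S (E F))))) = D (S (E F)) := by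
  
  -- Setup
  set ν := volume.restrict (Icc a b) with hν
  -- each `φ j ∘ x` is in L²(ν)
  have hφx : ∀ j, MemLp (fun t => φ j (x t)) 2 ν := by
    intro j
    have h1 : MemLp (φ j) 2 (ENNReal.ofReal M • μ) :=
      (hφ j).smul_measure ENNReal.ofReal_ne_top
    have h2 : MemLp (φ j) 2 (ν.map x) := h1.mono_measure hdom
    exact (memLp_map_measure_iff h2.1 hx.aemeasurable).1 h2
  -- hence each product `φ j ∘ x * ψ k` is integrable on ν
  have hint : ∀ j k, Integrable (fun t => φ j (x t) * ψ k t) ν := by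
    intro j k
    have : MemLp ((fun t => φ j (x t)) • (fun t => ψ k t)) 1 ν := by
      exact (hψ k).smul (hφx j)
    rw [memLp_one_iff_integrable] at this
    exact this
  -- key algebraic identity: `E (D w) = G.mulVec w`
  have hED : ∀ w, E (D w) = G.mulVec w := by
    intro w
    funext k
    rw [hE]
    have heq : (fun t => D w (x t) * ψ k t)
        = fun t => ∑ j, w j * (φ j (x t) * ψ k t) := by
      funext t
      rw [hD, Finset.sum_mul]
      simp [mul_assoc]
    calc ∫ t in Icc a b, D w (x t) * ψ k t
        = ∫ t in Icc a b, ∑ j, w j * (φ j (x t) * ψ k t) := by rw [heq]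
      _ = ∑ j, ∫ t in Icc a b, w j * (φ j (x t) * ψ k t) := by
          refine integral_finset_sum _ fun j _ => ?_
          exact (hint j k).const_mul _
      _ = ∑ j, w j * ∫ t in Icc a b, φ j (x t) * ψ k t := by
          simp [MeasureTheory.integral_const_mul]
      _ = G.mulVec w k := by
          simp only [Matrix.mulVec, dotProduct]
          refine Finset.sum_congr rfl fun j _ => ?_
          rw [hG, mul_comm]
  have na_zero : na 0 = 0 := (na_eq_zero 0).2 rfl
  -- main argument
  intro F hF
  set bv := E F with hbv
  set w0 := S bv with hw0
  have hEDw0 : E (D w0) = G.mulVec w0 := hED w0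
  -- `w1 := S (G w0)` is also a minimizer for `bv`, hence equals `w0`
  set w1 := S (G.mulVec w0) with hw1
  have key : w1 = w0 := by
    have h1 : na (G.mulVec w1 - G.mulVec w0) + lam * nb w1 ≤ lam * nb w0 := by
      have := hS (G.mulVec w0) w0
      simpa [na_zero] using this
    have h2 : na (G.mulVec w1 - bv) ≤
        na (G.mulVec w1 - G.mulVec w0) + na (G.mulVec w0 - bv) := by
      have : G.mulVec w1 - bv = (G.mulVec w1 - G.mulVec w0) + (G.mulVec w0 - bv) := by
        abel
      rw [this]
      exact na_add _ _
    have h3 : na (G.mulVec w1 - bv) + lam * nb w1 ≤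
        na (G.mulVec w0 - bv) + lam * nb w0 := by
      calc na (G.mulVec w1 - bv) + lam * nb w1
          ≤ (na (G.mulVec w1 - G.mulVec w0) + na (G.mulVec w0 - bv)) + lam * nb w1 := by
            linarith
        _ = na (G.mulVec w0 - bv) + (na (G.mulVec w1 - G.mulVec w0) + lam * nb w1) := by
            ring
        _ ≤ na (G.mulVec w0 - bv) + lam * nb w0 := by linarith
    have h4 : na (G.mulVec w0 - bv) + lam * nb w0 ≤
        na (G.mulVec w1 - bv) + lam * nb w1 := hS bv w1
    have h5 : na (G.mulVec w1 - bv) + lam * nb w1 =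
        na (G.mulVec w0 - bv) + lam * nb w0 := le_antisymm h3 h4
    exact hS_uniq bv w1 h5
  rw [hEDw0, ← hw1, key]
end

section
/- Let (ψ_k)_{k∈ℕ} be an orthonormal family in L²([a,b]), let g_0, …, g_J, F ∈ L²([a,b]), and for each K define G^K ∈ ℝ^{(K+1)×(J+1)} with entries (G^K)_{k,j} = ⟨g_j, ψ_k⟩ and b^K ∈ ℝ^{K+1} with entries (b^K)_k = ⟨F, ψ_k⟩. Suppose G^{K₀} is injective for some K₀, and for each K ≥ K₀ let w^K ∈ ℝ^{J+1} be the unique solution of the normal equations (G^K)ᵀ(G^K) w = (G^K)ᵀ b^K. Then the sequence (w^K)_{K ≥ K₀} is bounded in ℝ^{J+1}; specifically, ‖w^K‖_2 ≤ (Σ_{j=0}^J ‖g_j‖²_{L²([a,b])})^{1/2} · ‖F‖_{L²([a,b])} / λ_min((G^{K₀})ᵀ G^{K₀}) for all K ≥ K₀, where λ_min denotes the minimal eigenvalue. -/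
set_option autoImplicit false

open MeasureTheory Set Matrix

lemma quad_form_eq_sum_sq {m n : ℕ} (M : Matrix (Fin m) (Fin n) ℝ) (v : Fin n → ℝ) :
    v ⬝ᵥ (Mᵀ * M) *ᵥ v = ∑ k, ((M *ᵥ v) k) ^ 2 := by
  rw [← mulVec_mulVec, dotProduct_mulVec, vecMul_transpose]
  simp [dotProduct, sq]

lemma rayleigh_iInf_le {n : ℕ} {A : Matrix (Fin n) (Fin n) ℝ} (hA : A.IsHermitian)
    (v : Fin n → ℝ) :
    (⨅ i, hA.eigenvalues i) * (v ⬝ᵥ v) ≤ v ⬝ᵥ A *ᵥ v := by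
  set U : Matrix (Fin n) (Fin n) ℝ := (hA.eigenvectorUnitary : Matrix (Fin n) (Fin n) ℝ) with hU
  set y : Fin n → ℝ := (star U) *ᵥ v with hy
  have hUU : U * star U = 1 := by
    exact Matrix.mem_unitaryGroup_iff.mp hA.eigenvectorUnitary.2
  have hvU : v ᵥ* U = y := by
    ext i
    simp [hy, vecMul, mulVec, dotProduct, star, mul_comm]
  have h1 : v ⬝ᵥ A *ᵥ v = ∑ i, hA.eigenvalues i * y i ^ 2 := by
    conv_lhs => rw [hA.spectral_theorem]
    rw [Unitary.conjStarAlgAut_apply, ← hU]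
    rw [← mulVec_mulVec, ← mulVec_mulVec, dotProduct_mulVec, hvU]
    simp only [dotProduct, mulVec_diagonal, Function.comp]
    exact Finset.sum_congr rfl (fun i _ => by simp [RCLike.ofReal_real_eq_id]; ring)
  have h2 : v ⬝ᵥ v = ∑ i, y i ^ 2 := by
    have h : v ⬝ᵥ (U * star U) *ᵥ v = v ⬝ᵥ v := by rw [hUU]; simp
    rw [← h, ← mulVec_mulVec, dotProduct_mulVec, hvU]
    simp [dotProduct, sq, hy]
  rw [h1, h2, Finset.mul_sum]
  apply Finset.sum_le_sum
  intro i _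
  have hle : (⨅ i, hA.eigenvalues i) ≤ hA.eigenvalues i :=
    ciInf_le (Set.Finite.bddBelow (Set.finite_range _)) i
  nlinarith [sq_nonneg (y i)]


/-- Lemma 3.10: Let `(ψ_k)` be an orthonormal family in `L²([a,b])`,
`g_0,…,g_J, F ∈ L²([a,b])`, `(G^K)_{k,j} = ⟨g_j, ψ_k⟩`, `(b^K)_k = ⟨F, ψ_k⟩`.  Suppose
`G^{K₀}` is injective and for each `K ≥ K₀` let `w^K` solve the normal equations
`(G^K)ᵀ(G^K) w = (G^K)ᵀ b^K`.  Then for all `K ≥ K₀`,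
`‖w^K‖₂ ≤ (Σ_j ‖g_j‖²)^{1/2} ‖F‖ / λ_min((G^{K₀})ᵀ G^{K₀})`. -/
theorem normal_equation_solutions_bounded
    (a b : ℝ) {J : ℕ}
    (ψ : ℕ → Lp ℝ 2 (volume.restrict (Icc a b))) (hψ : Orthonormal ℝ ψ)
    (g : Fin (J + 1) → Lp ℝ 2 (volume.restrict (Icc a b)))
    (F : Lp ℝ 2 (volume.restrict (Icc a b)))
    (G : (K : ℕ) → Matrix (Fin (K + 1)) (Fin (J + 1)) ℝ)
    (hG : ∀ (K : ℕ) (k : Fin (K + 1)) (j : Fin (J + 1)),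
      G K k j = (inner ℝ (g j) (ψ (k : ℕ)) : ℝ))
    (bvec : (K : ℕ) → Fin (K + 1) → ℝ)
    (hbvec : ∀ (K : ℕ) (k : Fin (K + 1)), bvec K k = (inner ℝ F (ψ (k : ℕ)) : ℝ))
    (K₀ : ℕ) (hHerm : ((G K₀)ᵀ * G K₀).IsHermitian)
    (hinj : Function.Injective fun w => (G K₀).mulVec w)
    (w : ℕ → Fin (J + 1) → ℝ)
    (hw : ∀ K, K₀ ≤ K →
      ((G K)ᵀ * G K).mulVec (w K) = (G K)ᵀ.mulVec (bvec K)) :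
    ∀ K, K₀ ≤ K →
      Real.sqrt (∑ j, w K j ^ 2) ≤
        Real.sqrt (∑ j, ‖g j‖ ^ 2) * ‖F‖ / (⨅ i, hHerm.eigenvalues i) := by
  -- positivity of the smallest eigenvalue
  have hPD : ((G K₀)ᵀ * G K₀).PosDef := by
    refine PosDef.of_dotProduct_mulVec_pos hHerm fun x hx => ?_
    have hstar : star x = x := rfl
    rw [hstar, quad_form_eq_sum_sq]
    have hGx : (G K₀) *ᵥ x ≠ 0 := by
      intro h
      apply hx
      apply hinj
      simpa using h
    obtain ⟨k, hk⟩ := Function.ne_iff.mp hGx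
    exact Finset.sum_pos' (fun k _ => sq_nonneg _)
      ⟨k, Finset.mem_univ k, pow_two_pos_of_ne_zero hk⟩
  have heig : ∀ i, 0 < hHerm.eigenvalues i := fun i => hPD.eigenvalues_pos i
  set lam := ⨅ i, hHerm.eigenvalues i with hlam
  have hlampos : 0 < lam := by
    obtain ⟨i₀, hi₀⟩ := Finite.exists_min hHerm.eigenvalues
    exact lt_of_lt_of_le (heig i₀) (le_ciInf hi₀)
  intro K hK
  set v : Fin (J + 1) → ℝ := w K with hv
  set c : Fin (J + 1) → ℝ := (G K)ᵀ *ᵥ bvec K with hc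
  set S : ℝ := ∑ j, v j ^ 2 with hS
  set s : ℝ := Real.sqrt S with hs
  set C : ℝ := Real.sqrt (∑ j, ‖g j‖ ^ 2) * ‖F‖ with hC
  have hSnn : 0 ≤ S := Finset.sum_nonneg fun j _ => sq_nonneg _
  have hCnn : 0 ≤ C := mul_nonneg (Real.sqrt_nonneg _) (norm_nonneg _)
  -- Bessel's inequality, specialized
  have bessel : ∀ (x : Lp ℝ 2 (volume.restrict (Icc a b))) (n : ℕ),
      ∑ k : Fin (n + 1), (inner ℝ x (ψ (k : ℕ)) : ℝ) ^ 2 ≤ ‖x‖ ^ 2 := by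
    intro x n
    have h := hψ.sum_inner_products_le (s := Finset.range (n + 1)) x
    have heq : ∑ k : Fin (n + 1), (inner ℝ x (ψ (k : ℕ)) : ℝ) ^ 2
        = ∑ k ∈ Finset.range (n + 1), ‖(inner ℝ (ψ k) x : ℝ)‖ ^ 2 := by
      rw [← Fin.sum_univ_eq_sum_range (fun k => ‖(inner ℝ (ψ k) x : ℝ)‖ ^ 2) (n + 1)]
      exact Finset.sum_congr rfl fun k _ => by
        rw [real_inner_comm, Real.norm_eq_abs, sq_abs]
    rw [heq]
    exact h
  -- bound on the right-hand side vector
  have hcC : Real.sqrt (∑ j, c j ^ 2) ≤ C := by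
    have hcj : ∀ j, c j ^ 2 ≤ ‖g j‖ ^ 2 * ‖F‖ ^ 2 := by
      intro j
      have hcval : c j = ∑ k : Fin (K + 1),
          (inner ℝ (g j) (ψ (k : ℕ)) : ℝ) * (inner ℝ F (ψ (k : ℕ)) : ℝ) := by
        simp only [hc, mulVec, dotProduct, transpose_apply]
        exact Finset.sum_congr rfl fun k _ => by rw [hG, hbvec]
      have hCS := Finset.sum_mul_sq_le_sq_mul_sq Finset.univ
        (fun k : Fin (K + 1) => (inner ℝ (g j) (ψ (k : ℕ)) : ℝ))
        (fun k : Fin (K + 1) => (inner ℝ F (ψ (k : ℕ)) : ℝ))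
      rw [hcval]
      calc (∑ k : Fin (K + 1),
          (inner ℝ (g j) (ψ (k : ℕ)) : ℝ) * (inner ℝ F (ψ (k : ℕ)) : ℝ)) ^ 2
          ≤ (∑ k : Fin (K + 1), (inner ℝ (g j) (ψ (k : ℕ)) : ℝ) ^ 2) *
            (∑ k : Fin (K + 1), (inner ℝ F (ψ (k : ℕ)) : ℝ) ^ 2) := hCS
        _ ≤ ‖g j‖ ^ 2 * ‖F‖ ^ 2 := by
            apply mul_le_mul (bessel (g j) K) (bessel F K)
              (Finset.sum_nonneg fun k _ => sq_nonneg _) (sq_nonneg _)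
    calc Real.sqrt (∑ j, c j ^ 2)
        ≤ Real.sqrt ((∑ j, ‖g j‖ ^ 2) * ‖F‖ ^ 2) := by
          apply Real.sqrt_le_sqrt
          rw [Finset.sum_mul]
          exact Finset.sum_le_sum fun j _ => hcj j
      _ = C := by
          rw [Real.sqrt_mul (Finset.sum_nonneg fun j _ => sq_nonneg _),
            Real.sqrt_sq (norm_nonneg _)]
  -- the key chain of inequalities
  have key : lam * S ≤ s * C := by
    have hvv : v ⬝ᵥ v = S := by simp [dotProduct, hS, sq]
    have step1 : lam * S ≤ v ⬝ᵥ ((G K₀)ᵀ * G K₀) *ᵥ v := by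
      rw [← hvv]; exact rayleigh_iInf_le hHerm v
    have sum_eq : ∀ (n : ℕ), ∑ k : Fin (n + 1), ((G n *ᵥ v) k) ^ 2
        = ∑ k ∈ Finset.range (n + 1),
            (∑ j, (inner ℝ (g j) (ψ k) : ℝ) * v j) ^ 2 := by
      intro n
      rw [← Fin.sum_univ_eq_sum_range
        (fun k => (∑ j, (inner ℝ (g j) (ψ k) : ℝ) * v j) ^ 2) (n + 1)]
      refine Finset.sum_congr rfl fun k _ => ?_
      congr 1
      simp only [mulVec, dotProduct]
      exact Finset.sum_congr rfl fun j _ => by rw [hG]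
    have step2 : v ⬝ᵥ ((G K₀)ᵀ * G K₀) *ᵥ v ≤ v ⬝ᵥ ((G K)ᵀ * G K) *ᵥ v := by
      rw [quad_form_eq_sum_sq, quad_form_eq_sum_sq, sum_eq, sum_eq]
      exact Finset.sum_le_sum_of_subset_of_nonneg
        (Finset.range_subset_range.2 (by omega)) (fun k _ _ => sq_nonneg _)
    have step3 : v ⬝ᵥ ((G K)ᵀ * G K) *ᵥ v = v ⬝ᵥ c := by
      rw [hc, ← hw K hK]
    have step4 : v ⬝ᵥ c ≤ s * Real.sqrt (∑ j, c j ^ 2) := by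
      have := Real.sum_mul_le_sqrt_mul_sqrt Finset.univ v c
      simpa [dotProduct, hs, hS] using this
    have step5 : s * Real.sqrt (∑ j, c j ^ 2) ≤ s * C :=
      mul_le_mul_of_nonneg_left hcC (Real.sqrt_nonneg _)
    linarith
  -- conclude
  show s ≤ C / lam
  rcases eq_or_lt_of_le (Real.sqrt_nonneg S) with hz | hz
  · rw [← hs] at hz
    rw [← hz]
    positivity
  · rw [← hs] at hz
    have hsS : s ^ 2 = S := Real.sq_sqrt hSnn
    rw [le_div_iff₀ hlampos]
    nlinarith
end

section
/- Let (ψ_k)_{k∈ℕ} be a Hilbert basis of L²([a,b]) with P_K the orthogonal projection onto span{ψ_0,…,ψ_K}, let F, g_0, …, g_J ∈ L²([a,b]), define G^K with entries (G^K)_{k,j} = ⟨g_j, ψ_k⟩, and define M_K(w) = ‖P_K(F − Σ_{j=0}^J w_j g_j)‖² and M_∞(w) = ‖F − Σ_{j=0}^J w_j g_j‖² on ℝ^{J+1}. Suppose G^{K₀} is injective for some K₀. Then there exists m > 0 such that for every K ≥ K₀ the function M_K is m-strongly convex on ℝ^{J+1} (with respect to the Euclidean norm), and the function M_∞ is also m-strongly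 convex on ℝ^{J+1}. -/
set_option autoImplicit false

open MeasureTheory Set Matrix
open RealInnerProductSpace

section helpers
variable {E : Type*} [NormedAddCommGroup E] [InnerProductSpace ℝ E]

lemma combo_norm_sq (u v : E) (α β : ℝ) (h : α + β = 1) :
    ‖α • u + β • v‖ ^ 2 = α * ‖u‖ ^ 2 + β * ‖v‖ ^ 2 - α * β * ‖u - v‖ ^ 2 := by
  have hβ : β = 1 - α := by linarith
  subst hβ
  have h1 : ‖α • u + (1 - α) • v‖ ^ 2 = ⟪α • u + (1 - α) • v, α • u + (1 - α) • v⟫ :=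
    (real_inner_self_eq_norm_sq _).symm
  have h2 : ‖u‖ ^ 2 = ⟪u, u⟫ := (real_inner_self_eq_norm_sq _).symm
  have h3 : ‖v‖ ^ 2 = ⟪v, v⟫ := (real_inner_self_eq_norm_sq _).symm
  have h4 : ‖u - v‖ ^ 2 = ⟪u - v, u - v⟫ := (real_inner_self_eq_norm_sq _).symm
  have hc : ⟪v, u⟫ = ⟪u, v⟫ := real_inner_comm u v
  simp only [h1, h2, h3, h4, inner_add_left, inner_add_right, inner_sub_left,
    inner_sub_right, real_inner_smul_left, real_inner_smul_right, hc]
  ring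

lemma proj_unique {S : Submodule ℝ E} {u p q : E} (hp : p ∈ S) (hq : q ∈ S)
    (hup : ∀ v ∈ S, ⟪u - p, v⟫ = 0) (huq : ∀ v ∈ S, ⟪u - q, v⟫ = 0) : p = q := by
  have hmem : p - q ∈ S := S.sub_mem hp hq
  have e : ⟪p - q, p - q⟫ = ⟪u - q, p - q⟫ - ⟪u - p, p - q⟫ := by
    rw [← inner_sub_left]; congr 1; abel
  rw [hup _ hmem, huq _ hmem] at e
  have : p - q = 0 := (@inner_self_eq_zero ℝ _ _ _ _ _).mp (by simpa using e)
  exact sub_eq_zero.mp this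

lemma strongConvex_of_norm_sq {H E : Type*} [NormedAddCommGroup E] [InnerProductSpace ℝ E]
    [NormedAddCommGroup H] [InnerProductSpace ℝ H] (f : H → E) (m : ℝ)
    (hf : ∀ (α β : ℝ), α + β = 1 → ∀ x y : H, f (α • x + β • y) = α • f x + β • f y)
    (hlow : ∀ x y : H, m / 2 * ‖x - y‖ ^ 2 ≤ ‖f x - f y‖ ^ 2) :
    ConvexOn ℝ (Set.univ : Set H) (fun w => ‖f w‖ ^ 2 - m / 2 * ‖w‖ ^ 2) := by
  refine ⟨convex_univ, fun x _ y _ α β hα hβ hαβ => ?_⟩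
  simp only [smul_eq_mul]
  rw [hf α β hαβ x y, combo_norm_sq (f x) (f y) α β hαβ, combo_norm_sq x y α β hαβ]
  have key : 0 ≤ α * β * (‖f x - f y‖ ^ 2 - m / 2 * ‖x - y‖ ^ 2) :=
    mul_nonneg (mul_nonneg hα hβ) (sub_nonneg.mpr (hlow x y))
  nlinarith [key]

end helpers

set_option maxHeartbeats 2000000 in
/-- Proposition 3.12: With `(ψ_k)` a Hilbert basis of `L²([a,b])`,
`P K` the orthogonal projection onto `span{ψ_0,…,ψ_K}`, `F, g_0,…,g_J ∈ L²([a,b])`,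
`(G^K)_{k,j} = ⟨g_j, ψ_k⟩`, `M_K(w) = ‖P_K(F − Σ_j w_j g_j)‖²` and
`M_∞(w) = ‖F − Σ_j w_j g_j‖²`, if `G^{K₀}` is injective then there is `m > 0` such
that `M_K` is `m`-strongly convex on `ℝ^{J+1}` (with the Euclidean norm) for every
`K ≥ K₀`, and `M_∞` is `m`-strongly convex as well.  (Here `m`-strong convexity of
`h` means convexity of `w ↦ h(w) − (m/2)‖w‖²`.) -/
theorem weak_SINDy_objectives_strongly_convex
    (a b : ℝ) (hab : a < b) {J : ℕ}
    (ψ : ℕ → Lp ℝ 2 (volume.restrict (Icc a b))) (hψ : Orthonormal ℝ ψ)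
    (hcomplete : (Submodule.span ℝ (Set.range ψ)).topologicalClosure = ⊤)
    (F : Lp ℝ 2 (volume.restrict (Icc a b)))
    (g : Fin (J + 1) → Lp ℝ 2 (volume.restrict (Icc a b)))
    (P : ℕ → Lp ℝ 2 (volume.restrict (Icc a b)) → Lp ℝ 2 (volume.restrict (Icc a b)))
    (hPmem : ∀ K u, P K u ∈ Submodule.span ℝ (ψ '' Set.Iic K))
    (hPorth : ∀ K u, ∀ v ∈ Submodule.span ℝ (ψ '' Set.Iic K),
      (inner ℝ (u - P K u) v : ℝ) = 0)
    (G : (K : ℕ) → Matrix (Fin (K + 1)) (Fin (J + 1)) ℝ)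
    (hG : ∀ (K : ℕ) (k : Fin (K + 1)) (j : Fin (J + 1)),
      G K k j = (inner ℝ (g j) (ψ (k : ℕ)) : ℝ))
    (MK : ℕ → EuclideanSpace ℝ (Fin (J + 1)) → ℝ)
    (hMK : ∀ K w, MK K w = ‖P K (F - ∑ j, w j • g j)‖ ^ 2)
    (Minf : EuclideanSpace ℝ (Fin (J + 1)) → ℝ)
    (hMinf : ∀ w, Minf w = ‖F - ∑ j, w j • g j‖ ^ 2)
    (K₀ : ℕ) (hinj : Function.Injective fun w => (G K₀).mulVec w) :
    ∃ m > (0 : ℝ),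
      (∀ K, K₀ ≤ K →
        ConvexOn ℝ (Set.univ : Set (EuclideanSpace ℝ (Fin (J + 1))))
          (fun w => MK K w - m / 2 * ‖w‖ ^ 2)) ∧
      ConvexOn ℝ (Set.univ : Set (EuclideanSpace ℝ (Fin (J + 1))))
        (fun w => Minf w - m / 2 * ‖w‖ ^ 2) := by
  classical
  obtain ⟨L, hLdef⟩ : ∃ L : EuclideanSpace ℝ (Fin (J + 1)) → Lp ℝ 2 (volume.restrict (Icc a b)),
      L = fun w => ∑ j, w j • g j := ⟨_, rfl⟩
  have hMK' : ∀ K w, MK K w = ‖P K (F - L w)‖ ^ 2 := by intro K w; rw [hMK, hLdef]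
  have hMinf' : ∀ w, Minf w = ‖F - L w‖ ^ 2 := by intro w; rw [hMinf, hLdef]
  -- linearity of L
  have hLlin : ∀ (α β : ℝ) (x y : EuclideanSpace ℝ (Fin (J + 1))),
      L (α • x + β • y) = α • L x + β • L y := by
    intro α β x y
    simp only [hLdef, Finset.smul_sum, ← Finset.sum_add_distrib]
    refine Finset.sum_congr rfl fun j _ => ?_
    simp [PiLp.add_apply, PiLp.smul_apply, add_smul, smul_smul]
  -- combination rule for P K
  have hPcombo : ∀ K (α β : ℝ) (u v : Lp ℝ 2 (volume.restrict (Icc a b))),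
      P K (α • u + β • v) = α • P K u + β • P K v := by
    intro K α β u v
    refine proj_unique (hPmem K _) (Submodule.add_mem _
      (Submodule.smul_mem _ _ (hPmem K u)) (Submodule.smul_mem _ _ (hPmem K v)))
      (hPorth K _) ?_
    intro s hs
    have h1 := hPorth K u s hs
    have h2 := hPorth K v s hs
    have : (α • u + β • v) - (α • P K u + β • P K v)
        = α • (u - P K u) + β • (v - P K v) := by module
    rw [this, inner_add_left, real_inner_smul_left, real_inner_smul_left, h1, h2]
    ring
  have hPsub : ∀ K (u v : Lp ℝ 2 (volume.restrict (Icc a b))), P K (u - v) = P K u - P K v := by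
    intro K u v
    have := hPcombo K 1 (-1) u v
    simpa [sub_eq_add_neg] using this
  -- self inner product
  have hself : ∀ K u, ⟪u, P K u⟫ = ‖P K u‖ ^ 2 := by
    intro K u
    have h := hPorth K u (P K u) (hPmem K u)
    rw [inner_sub_left] at h
    have : ⟪u, P K u⟫ = ⟪P K u, P K u⟫ := by linarith
    rw [this, real_inner_self_eq_norm_sq]
  -- norm of P K₀ u is at most norm of P K u for K₀ ≤ K, and at most norm u
  have hmono : ∀ K, K₀ ≤ K → ∀ u, ‖P K₀ u‖ ≤ ‖P K u‖ := by
    intro K hK u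
    have hSle : Submodule.span ℝ (ψ '' Set.Iic K₀) ≤ Submodule.span ℝ (ψ '' Set.Iic K) :=
      Submodule.span_mono (Set.image_mono (Set.Iic_subset_Iic.mpr hK))
    have h0 : ⟪u - P K u, P K₀ u⟫ = 0 := hPorth K u _ (hSle (hPmem K₀ u))
    rw [inner_sub_left] at h0
    have h1 : ‖P K₀ u‖ ^ 2 = ⟪P K u, P K₀ u⟫ := by
      have := hself K₀ u; linarith
    have h2 : ⟪P K u, P K₀ u⟫ ≤ ‖P K u‖ * ‖P K₀ u‖ := real_inner_le_norm _ _
    nlinarith [norm_nonneg (P K₀ u), norm_nonneg (P K u)]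
  have hle : ∀ K u, ‖P K u‖ ≤ ‖u‖ := by
    intro K u
    have h1 : ‖P K u‖ ^ 2 = ⟪u, P K u⟫ := (hself K u).symm
    have h2 : ⟪u, P K u⟫ ≤ ‖u‖ * ‖P K u‖ := real_inner_le_norm _ _
    nlinarith [norm_nonneg (P K u), norm_nonneg u]
  -- explicit formula for P K₀
  have hmemψ : ∀ k : Fin (K₀ + 1), ψ (k : ℕ) ∈ Submodule.span ℝ (ψ '' Set.Iic K₀) := fun k =>
    Submodule.subset_span ⟨(k : ℕ), Nat.lt_succ_iff.mp k.isLt, rfl⟩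
  have hψite := orthonormal_iff_ite.mp hψ
  have hexp : ∀ u : Lp ℝ 2 (volume.restrict (Icc a b)), P K₀ u = ∑ k : Fin (K₀ + 1), ⟪u, ψ (k : ℕ)⟫ • ψ (k : ℕ) := by
    intro u
    refine proj_unique (hPmem K₀ u)
      (Submodule.sum_mem _ fun k _ => Submodule.smul_mem _ _ (hmemψ k))
      (hPorth K₀ u) ?_
    intro v hv
    induction hv using Submodule.span_induction with
    | mem x hx =>
        obtain ⟨i, hi, rfl⟩ := hx
        have hi' : i ≤ K₀ := hi
        set i' : Fin (K₀ + 1) := ⟨i, Nat.lt_succ_of_le hi'⟩ with hi'def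
        rw [inner_sub_left, sum_inner]
        have hsum : (∑ k : Fin (K₀ + 1), ⟪(⟪u, ψ (k : ℕ)⟫ : ℝ) • ψ (k : ℕ), ψ i⟫)
            = ⟪u, ψ i⟫ := by
          rw [Finset.sum_eq_single i']
          · rw [real_inner_smul_left, hψite]
            simp [hi'def]
          · intro k _ hk
            rw [real_inner_smul_left, hψite]
            have : (k : ℕ) ≠ i := by
              intro h; apply hk; apply Fin.ext; simpa [hi'def] using h
            simp [this]
          · intro h; exact absurd (Finset.mem_univ i') h
        rw [hsum]; ring
    | zero => simp
    | add x y hx hy ihx ihy => rw [inner_add_right, ihx, ihy]; ring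
    | smul a x hx ihx => rw [real_inner_smul_right, ihx]; ring
  -- norm squared of P K₀
  have hPnorm : ∀ u : Lp ℝ 2 (volume.restrict (Icc a b)), ‖P K₀ u‖ ^ 2 = ∑ k : Fin (K₀ + 1), ⟪u, ψ (k : ℕ)⟫ ^ 2 := by
    intro u
    have hon : Orthonormal ℝ (fun k : Fin (K₀ + 1) => ψ (k : ℕ)) :=
      hψ.comp _ Fin.val_injective
    rw [hexp u, ← real_inner_self_eq_norm_sq]
    rw [hon.inner_sum (fun k => ⟪u, ψ (k : ℕ)⟫) (fun k => ⟪u, ψ (k : ℕ)⟫) Finset.univ]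
    simp [sq]
  -- the coefficients are the matrix-vector product
  have hcoeff : ∀ (z : EuclideanSpace ℝ (Fin (J + 1))) (k : Fin (K₀ + 1)),
      ⟪L z, ψ (k : ℕ)⟫ = (G K₀).mulVec z k := by
    intro z k
    simp only [hLdef, sum_inner, real_inner_smul_left]
    simp only [Matrix.mulVec, dotProduct, hG]
    refine Finset.sum_congr rfl fun j _ => ?_
    rw [real_inner_comm]
    ring
  -- antilipschitz constant
  have hA : ∃ c > (0 : ℝ), ∀ z : EuclideanSpace ℝ (Fin (J + 1)),
      c * ‖z‖ ^ 2 ≤ ‖P K₀ (L z)‖ ^ 2 := by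
    let A : EuclideanSpace ℝ (Fin (J + 1)) →ₗ[ℝ] EuclideanSpace ℝ (Fin (K₀ + 1)) :=
      { toFun := fun z => WithLp.toLp 2 ((G K₀).mulVec z)
        map_add' := fun x y => by ext i; simp [Matrix.mulVec_add]
        map_smul' := fun c x => by ext i; simp [Matrix.mulVec_smul] }
    have hker : LinearMap.ker A = ⊥ := LinearMap.ker_eq_bot.mpr (fun x y h => by
      have h' : (G K₀).mulVec x.ofLp = (G K₀).mulVec y.ofLp := congrArg WithLp.ofLp h
      ext i; exact congrFun (hinj h') i)
    obtain ⟨Kc, hKc, hanti⟩ := A.exists_antilipschitzWith hker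
    have hAnorm : ∀ z : EuclideanSpace ℝ (Fin (J + 1)), ‖A z‖ ^ 2 = ‖P K₀ (L z)‖ ^ 2 := by
      intro z
      rw [hPnorm (L z), ← real_inner_self_eq_norm_sq, PiLp.inner_apply]
      refine Finset.sum_congr rfl fun k _ => ?_
      rw [hcoeff z k]
      simp [A, sq]
    have hz : ∀ z : EuclideanSpace ℝ (Fin (J + 1)), ‖z‖ ≤ (Kc : ℝ) * ‖A z‖ := by
      intro z
      have := hanti.le_mul_dist z 0
      simpa [dist_eq_norm, map_zero] using this
    refine ⟨((Kc : ℝ) ^ 2 + 1)⁻¹, by positivity, fun z => ?_⟩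
    have h1 : ‖z‖ ^ 2 ≤ (Kc : ℝ) ^ 2 * ‖A z‖ ^ 2 := by
      nlinarith [hz z, norm_nonneg z, norm_nonneg (A z), NNReal.coe_nonneg Kc]
    have h2 : ((Kc : ℝ) ^ 2 + 1)⁻¹ * ((Kc : ℝ) ^ 2 + 1) = 1 := by
      field_simp
    rw [← hAnorm z]
    have hpos : (0 : ℝ) < (Kc : ℝ) ^ 2 + 1 := by positivity
    have h3 : (0 : ℝ) < ((Kc : ℝ) ^ 2 + 1)⁻¹ := by positivity
    nlinarith [sq_nonneg ‖A z‖, mul_le_mul_of_nonneg_left h1 h3.le]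
  obtain ⟨c, hc0, hclow⟩ := hA
  refine ⟨c, hc0, ?_, ?_⟩
  · intro K hK
    have : (fun w => MK K w - c / 2 * ‖w‖ ^ 2)
        = fun w => ‖P K (F - L w)‖ ^ 2 - c / 2 * ‖w‖ ^ 2 := by
      funext w; rw [hMK']
    rw [this]
    refine strongConvex_of_norm_sq (fun w => P K (F - L w)) c ?_ ?_
    · intro α β hαβ x y
      show P K (F - L (α • x + β • y)) = α • P K (F - L x) + β • P K (F - L y)
      have h1 : F - L (α • x + β • y) = α • (F - L x) + β • (F - L y) := by
        rw [hLlin]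
        match_scalars <;> linarith
      rw [h1, hPcombo]
    · intro x y
      show c / 2 * ‖x - y‖ ^ 2 ≤ ‖P K (F - L x) - P K (F - L y)‖ ^ 2
      have h1 : P K (F - L x) - P K (F - L y) = P K (L (y - x)) := by
        rw [← hPsub]
        congr 1
        have : (1 : ℝ) • y + (-1 : ℝ) • x = y - x := by module
        rw [← this, hLlin]
        module
      rw [h1]
      have h2 : c * ‖y - x‖ ^ 2 ≤ ‖P K₀ (L (y - x))‖ ^ 2 := hclow _
      have h3 : ‖P K₀ (L (y - x))‖ ≤ ‖P K (L (y - x))‖ := hmono K hK _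
      have h4 : ‖P K₀ (L (y - x))‖ ^ 2 ≤ ‖P K (L (y - x))‖ ^ 2 := by
        nlinarith [norm_nonneg (P K₀ (L (y - x))), norm_nonneg (P K (L (y - x)))]
      rw [norm_sub_rev]
      nlinarith [sq_nonneg ‖y - x‖]
  · have : (fun w => Minf w - c / 2 * ‖w‖ ^ 2)
        = fun w => ‖F - L w‖ ^ 2 - c / 2 * ‖w‖ ^ 2 := by
      funext w; rw [hMinf']
    rw [this]
    refine strongConvex_of_norm_sq (fun w => F - L w) c ?_ ?_
    · intro α β hαβ x y
      show F - L (α • x + β • y) = α • (F - L x) + β • (F - L y)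
      rw [hLlin]
      match_scalars <;> linarith
    · intro x y
      show c / 2 * ‖x - y‖ ^ 2 ≤ ‖(F - L x) - (F - L y)‖ ^ 2
      have h1 : (F - L x) - (F - L y) = L (y - x) := by
        have : (1 : ℝ) • y + (-1 : ℝ) • x = y - x := by module
        rw [← this, hLlin]
        module
      rw [h1]
      have h2 : c * ‖y - x‖ ^ 2 ≤ ‖P K₀ (L (y - x))‖ ^ 2 := hclow _
      have h3 : ‖P K₀ (L (y - x))‖ ≤ ‖L (y - x)‖ := hle K₀ _
      have h4 : ‖P K₀ (L (y - x))‖ ^ 2 ≤ ‖L (y - x)‖ ^ 2 := by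
        nlinarith [norm_nonneg (P K₀ (L (y - x))), norm_nonneg (L (y - x))]
      rw [norm_sub_rev]
      nlinarith [sq_nonneg ‖y - x‖]
end

section
/- Let (ψ_k)_{k∈ℕ} be a Hilbert basis of L²([a,b]) with P_K the orthogonal projection onto span{ψ_0,…,ψ_K}. Let F, g_0, …, g_J ∈ L²([a,b]), define G^K with entries (G^K)_{k,j} = ⟨g_j, ψ_k⟩ for 0 ≤ k ≤ K, and define M_K(w) = ‖P_K(F − Σ_{j=0}^J w_j g_j)‖² and M_∞(w) = ‖F − Σ_{j=0}^J w_j g_j‖² on ℝ^{J+1}. Suppose G^{K₀} is injective for some K₀ (so that for each K ≥ K₀ the objective M_K has a unique minimizer w^K ∈ ℝ^{J+1}, and M_∞ has a unique minimizer w^∞ ∈ ℝ^{J+1}). Then w^K converges to w^∞ in ℝ^{J+1} as K → ∞. -/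
set_option autoImplicit false

open MeasureTheory Set Matrix

set_option maxHeartbeats 1000000 in
/-- Proposition 3.14: With `(ψ_k)` a Hilbert basis of `L²([a,b])`,
`P K` the orthogonal projection onto `span{ψ_0,…,ψ_K}`, `F, g_0,…,g_J ∈ L²([a,b])`,
`(G^K)_{k,j} = ⟨g_j, ψ_k⟩`, `M_K(w) = ‖P_K(F − Σ_j w_j g_j)‖²` and
`M_∞(w) = ‖F − Σ_j w_j g_j‖²`, suppose `G^{K₀}` is injective, and for `K ≥ K₀` let
`w^K` be the unique minimizer of `M_K` and `w^∞` the unique minimizer of `M_∞`.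
Then `w^K → w^∞` in `ℝ^{J+1}` as `K → ∞`. -/
theorem weak_SINDy_coefficients_converge
    (a b : ℝ) (hab : a < b) {J : ℕ}
    (ψ : ℕ → Lp ℝ 2 (volume.restrict (Icc a b))) (hψ : Orthonormal ℝ ψ)
    (hcomplete : (Submodule.span ℝ (Set.range ψ)).topologicalClosure = ⊤)
    (F : Lp ℝ 2 (volume.restrict (Icc a b)))
    (g : Fin (J + 1) → Lp ℝ 2 (volume.restrict (Icc a b)))
    (P : ℕ → Lp ℝ 2 (volume.restrict (Icc a b)) → Lp ℝ 2 (volume.restrict (Icc a b)))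
    (hPmem : ∀ K u, P K u ∈ Submodule.span ℝ (ψ '' Set.Iic K))
    (hPorth : ∀ K u, ∀ v ∈ Submodule.span ℝ (ψ '' Set.Iic K),
      (inner ℝ (u - P K u) v : ℝ) = 0)
    (G : (K : ℕ) → Matrix (Fin (K + 1)) (Fin (J + 1)) ℝ)
    (hG : ∀ (K : ℕ) (k : Fin (K + 1)) (j : Fin (J + 1)),
      G K k j = (inner ℝ (g j) (ψ (k : ℕ)) : ℝ))
    (MK : ℕ → EuclideanSpace ℝ (Fin (J + 1)) → ℝ)
    (hMK : ∀ K w, MK K w = ‖P K (F - ∑ j, w j • g j)‖ ^ 2)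
    (Minf : EuclideanSpace ℝ (Fin (J + 1)) → ℝ)
    (hMinf : ∀ w, Minf w = ‖F - ∑ j, w j • g j‖ ^ 2)
    (K₀ : ℕ) (hinj : Function.Injective fun w => (G K₀).mulVec w)
    -- `w^K` is the unique minimizer of `M_K` for `K ≥ K₀`
    (wK : ℕ → EuclideanSpace ℝ (Fin (J + 1)))
    (hwKmin : ∀ K, K₀ ≤ K → ∀ v, MK K (wK K) ≤ MK K v)
    (hwKuniq : ∀ K, K₀ ≤ K → ∀ v, MK K v = MK K (wK K) → v = wK K)
    -- `w^∞` is the unique minimizer of `M_∞`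
    (winf : EuclideanSpace ℝ (Fin (J + 1)))
    (hwinfmin : ∀ v, Minf winf ≤ Minf v)
    (hwinfuniq : ∀ v, Minf v = Minf winf → v = winf) :
    Filter.Tendsto wK Filter.atTop (nhds winf) := by
  classical
  -- abbreviation
  let H := Lp ℝ 2 (volume.restrict (Icc a b))
  -- a small real fact used repeatedly
  have sq_le : ∀ x y : ℝ, 0 ≤ y → x ^ 2 ≤ y ^ 2 → x ≤ y := by
    intro x y hy h; nlinarith
  -- monotonicity of the spans
  have hSmono : ∀ {K K' : ℕ}, K ≤ K' →
      Submodule.span ℝ (ψ '' Set.Iic K) ≤ Submodule.span ℝ (ψ '' Set.Iic K') := by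
    intro K K' h
    exact Submodule.span_mono (Set.image_mono (Set.Iic_subset_Iic.2 (Nat.cast_le.2 h)))
  -- Pythagoras relative to the projection
  have hpyth : ∀ (K : ℕ) (u v : H), v ∈ Submodule.span ℝ (ψ '' Set.Iic K) →
      ‖u - v‖ ^ 2 = ‖u - P K u‖ ^ 2 + ‖P K u - v‖ ^ 2 := by
    intro K u v hv
    have h0 : (inner ℝ (u - P K u) (P K u - v) : ℝ) = 0 :=
      hPorth K u _ (Submodule.sub_mem _ (hPmem K u) hv)
    have hdecomp : u - v = (u - P K u) + (P K u - v) := by abel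
    rw [hdecomp, norm_add_sq_real, h0]; ring
  have hnorm_sq : ∀ (K : ℕ) (u : H), ‖u‖ ^ 2 = ‖u - P K u‖ ^ 2 + ‖P K u‖ ^ 2 := by
    intro K u
    simpa using hpyth K u 0 (Submodule.zero_mem _)
  have hProj_le : ∀ (K : ℕ) (u : H), ‖P K u‖ ^ 2 ≤ ‖u‖ ^ 2 := by
    intro K u
    have := hnorm_sq K u
    nlinarith [sq_nonneg ‖u - P K u‖]
  have hres_mono : ∀ {K K' : ℕ}, K ≤ K' → ∀ u : H,
      ‖u - P K' u‖ ^ 2 ≤ ‖u - P K u‖ ^ 2 := by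
    intro K K' h u
    have := hpyth K' u (P K u) (hSmono h (hPmem K u))
    nlinarith [sq_nonneg ‖P K' u - P K u‖]
  have hproj_mono : ∀ {K K' : ℕ}, K ≤ K' → ∀ u : H,
      ‖P K u‖ ^ 2 ≤ ‖P K' u‖ ^ 2 := by
    intro K K' h u
    have h1 := hnorm_sq K u
    have h2 := hnorm_sq K' u
    have h3 := hres_mono h u
    linarith
  -- uniqueness of the projection, and linearity over subtraction
  have huniq : ∀ (K : ℕ) (u p : H), p ∈ Submodule.span ℝ (ψ '' Set.Iic K) →
      (∀ v ∈ Submodule.span ℝ (ψ '' Set.Iic K), (inner ℝ (u - p) v : ℝ) = 0) →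
      p = P K u := by
    intro K u p hp hperp
    have hmem : P K u - p ∈ Submodule.span ℝ (ψ '' Set.Iic K) :=
      Submodule.sub_mem _ (hPmem K u) hp
    have h0 : (inner ℝ (P K u - p) (P K u - p) : ℝ) = 0 := by
      have h1 := hperp _ hmem
      have h2 := hPorth K u _ hmem
      have h3 : (inner ℝ ((u - p) - (u - P K u)) (P K u - p) : ℝ) = 0 := by
        rw [inner_sub_left, h1, h2]; ring
      have h4 : (u - p) - (u - P K u) = P K u - p := by abel
      rwa [h4] at h3
    have h5 : P K u - p = 0 := inner_self_eq_zero.mp h0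
    have h6 := sub_eq_zero.mp h5
    exact h6.symm
  have hPsub : ∀ (K : ℕ) (u v : H), P K (u - v) = P K u - P K v := by
    intro K u v
    refine (huniq K (u - v) _ (Submodule.sub_mem _ (hPmem K u) (hPmem K v)) ?_).symm
    intro z hz
    have h1 := hPorth K u z hz
    have h2 := hPorth K v z hz
    have h3 : (u - v) - (P K u - P K v) = (u - P K u) - (v - P K v) := by abel
    rw [h3, inner_sub_left, h1, h2, sub_zero]
  -- P K is 1-Lipschitz
  have hPlip : ∀ K : ℕ, LipschitzWith 1 (P K) := by
    intro K
    refine LipschitzWith.of_dist_le_mul fun u v => ?_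
    rw [dist_eq_norm, dist_eq_norm, ← hPsub K u v, NNReal.coe_one, one_mul]
    exact sq_le _ _ (norm_nonneg _) (hProj_le K (u - v))
  -- the linear map T
  let Tl : EuclideanSpace ℝ (Fin (J + 1)) →ₗ[ℝ] H :=
    { toFun := fun w => ∑ j, w j • g j
      map_add' := by
        intro x y
        show (∑ j, (x + y) j • g j) = (∑ j, x j • g j) + ∑ j, y j • g j
        rw [← Finset.sum_add_distrib]
        exact Finset.sum_congr rfl fun j _ => by
          show (x j + y j) • g j = x j • g j + y j • g j
          rw [add_smul]
      map_smul' := by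
        intro c x
        show (∑ j, (c • x) j • g j) = c • ∑ j, x j • g j
        rw [Finset.smul_sum]
        exact Finset.sum_congr rfl fun j _ => by
          show (c * x j) • g j = c • (x j • g j)
          rw [mul_smul] }
  have hTl : ∀ w : EuclideanSpace ℝ (Fin (J + 1)), Tl w = ∑ j, w j • g j := fun _ => rfl
  have hMK' : ∀ (K : ℕ) (w : EuclideanSpace ℝ (Fin (J + 1))),
      MK K w = ‖P K (F - Tl w)‖ ^ 2 := by
    intro K w; rw [hMK, hTl]
  have hMinf' : ∀ w : EuclideanSpace ℝ (Fin (J + 1)), Minf w = ‖F - Tl w‖ ^ 2 := by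
    intro w; rw [hMinf, hTl]
  have hTcont : Continuous Tl := Tl.continuous_of_finiteDimensional
  -- continuity of each M_K
  have hMKcont : ∀ K : ℕ, Continuous (MK K) := by
    intro K
    have h1 : Continuous fun w : EuclideanSpace ℝ (Fin (J + 1)) => F - Tl w :=
      continuous_const.sub hTcont
    have h2 : Continuous fun w : EuclideanSpace ℝ (Fin (J + 1)) =>
        ‖P K (F - Tl w)‖ ^ 2 := (((hPlip K).continuous.comp h1).norm.pow 2)
    have h3 : MK K = fun w => ‖P K (F - Tl w)‖ ^ 2 := funext fun w => hMK' K w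
    rw [h3]; exact h2
  -- pointwise monotone convergence of M_K to M_∞
  have hM_mono : ∀ {K K' : ℕ}, K ≤ K' → ∀ w, MK K w ≤ MK K' w := by
    intro K K' h w
    rw [hMK', hMK']
    exact hproj_mono h _
  have hM_le_inf : ∀ (K : ℕ) (w), MK K w ≤ Minf w := by
    intro K w
    rw [hMK', hMinf']
    exact hProj_le K _
  -- the residual tends to zero
  have htend0 : ∀ u : H, Filter.Tendsto (fun K => ‖u - P K u‖) Filter.atTop (nhds 0) := by
    intro u
    rw [Metric.tendsto_atTop]
    intro ε hε
    have hu : u ∈ closure ((Submodule.span ℝ (Set.range ψ) : Submodule ℝ H) : Set H) := by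
      rw [← Submodule.topologicalClosure_coe, hcomplete]
      exact Submodule.mem_top
    obtain ⟨v, hv, hdist⟩ := Metric.mem_closure_iff.mp hu ε hε
    have hvK : ∃ K : ℕ, v ∈ Submodule.span ℝ (ψ '' Set.Iic K) := by
      have hle : Submodule.span ℝ (Set.range ψ) ≤
          ⨆ K : ℕ, Submodule.span ℝ (ψ '' Set.Iic K) := by
        rw [Submodule.span_le]
        rintro _ ⟨n, rfl⟩
        exact SetLike.le_def.mp (le_iSup (fun K : ℕ => Submodule.span ℝ (ψ '' Set.Iic K)) n)
          (Submodule.subset_span ⟨n, Set.self_mem_Iic, rfl⟩)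
      have hdir : Directed (· ≤ ·) fun K : ℕ => Submodule.span ℝ (ψ '' Set.Iic K) := by
        refine Monotone.directed_le fun K K' h => hSmono h
      exact (Submodule.mem_iSup_of_directed _ hdir).mp (hle hv)
    obtain ⟨K, hvK⟩ := hvK
    refine ⟨K, fun n hn => ?_⟩
    rw [Real.dist_eq, sub_zero, abs_of_nonneg (norm_nonneg _)]
    have h1 : ‖u - P n u‖ ^ 2 ≤ ‖u - P K u‖ ^ 2 := hres_mono hn u
    have h2 : ‖u - P K u‖ ^ 2 ≤ ‖u - v‖ ^ 2 := by
      have := hpyth K u v hvK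
      nlinarith [sq_nonneg ‖P K u - v‖]
    have h3 : ‖u - P n u‖ ≤ ‖u - v‖ := sq_le _ _ (norm_nonneg _) (le_trans h1 h2)
    calc ‖u - P n u‖ ≤ ‖u - v‖ := h3
      _ = dist u v := (dist_eq_norm u v).symm
      _ < ε := hdist
  have hMtend : ∀ w, Filter.Tendsto (fun K => MK K w) Filter.atTop (nhds (Minf w)) := by
    intro w
    have h1 : Filter.Tendsto (fun K => P K (F - Tl w)) Filter.atTop (nhds (F - Tl w)) := by
      rw [tendsto_iff_norm_sub_tendsto_zero]
      have heq : (fun K => ‖P K (F - Tl w) - (F - Tl w)‖)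
          = fun K => ‖(F - Tl w) - P K (F - Tl w)‖ := funext fun K => norm_sub_rev _ _
      rw [heq]
      exact htend0 (F - Tl w)
    have h2 : Filter.Tendsto (fun K => ‖P K (F - Tl w)‖ ^ 2) Filter.atTop
        (nhds (‖F - Tl w‖ ^ 2)) := h1.norm.pow 2
    have h3 : (fun K => MK K w) = fun K => ‖P K (F - Tl w)‖ ^ 2 :=
      funext fun K => hMK' K w
    rw [h3, hMinf']
    exact h2
  -- the linear map L = G^{K₀}
  let Ll : EuclideanSpace ℝ (Fin (J + 1)) →ₗ[ℝ] EuclideanSpace ℝ (Fin (K₀ + 1)) :=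
    (WithLp.linearEquiv 2 ℝ (Fin (K₀ + 1) → ℝ)).symm.toLinearMap.comp
      (((G K₀).mulVecLin).comp (WithLp.linearEquiv 2 ℝ (Fin (J + 1) → ℝ)).toLinearMap)
  have hLl : ∀ w : EuclideanSpace ℝ (Fin (J + 1)), Ll w = (G K₀).mulVec w := fun _ => rfl
  have hLlinj : Function.Injective Ll := by
    intro x y h
    have h' := congrArg WithLp.ofLp h
    rw [hLl, hLl] at h'
    exact WithLp.ofLp_injective _ (hinj h')
  -- coordinates of L w are the inner products of T w with the ψ's
  have hLcoord : ∀ (w : EuclideanSpace ℝ (Fin (J + 1))) (k : Fin (K₀ + 1)),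
      Ll w k = (inner ℝ (ψ (k : ℕ)) (Tl w) : ℝ) := by
    intro w k
    have h1 : Ll w k = ∑ j, (inner ℝ (g j) (ψ (k : ℕ)) : ℝ) * w j := by
      rw [hLl]
      show (G K₀).mulVec w k = _
      rw [Matrix.mulVec, dotProduct]
      exact Finset.sum_congr rfl fun j _ => by rw [hG]
    rw [h1, hTl, inner_sum]
    refine Finset.sum_congr rfl fun j _ => ?_
    rw [real_inner_smul_right, real_inner_comm]
    ring
  -- ‖L w‖ ≤ ‖P K₀ (T w)‖ via Bessel's inequality
  have hA : ∀ w : EuclideanSpace ℝ (Fin (J + 1)), ‖Ll w‖ ≤ ‖P K₀ (Tl w)‖ := by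
    intro w
    refine sq_le _ _ (norm_nonneg _) ?_
    have horth : Orthonormal ℝ fun k : Fin (K₀ + 1) => ψ (k : ℕ) :=
      hψ.comp _ Fin.val_injective
    have hb := horth.sum_inner_products_le (P K₀ (Tl w)) (s := Finset.univ)
    have hcoord : ∀ k : Fin (K₀ + 1),
        (inner ℝ (ψ (k : ℕ)) (P K₀ (Tl w)) : ℝ) = Ll w k := by
      intro k
      have hmem : ψ (k : ℕ) ∈ Submodule.span ℝ (ψ '' Set.Iic K₀) :=
        Submodule.subset_span ⟨(k : ℕ), Nat.lt_succ_iff.mp k.isLt, rfl⟩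
      have h0 := hPorth K₀ (Tl w) _ hmem
      have h1 : (inner ℝ (ψ (k : ℕ)) (Tl w - P K₀ (Tl w)) : ℝ) = 0 := by
        rw [real_inner_comm]; exact h0
      rw [inner_sub_right] at h1
      rw [hLcoord w k]
      linarith
    have hnorm : ‖Ll w‖ ^ 2 = ∑ k : Fin (K₀ + 1), ‖Ll w k‖ ^ 2 := by
      rw [EuclideanSpace.norm_eq]
      rw [Real.sq_sqrt (Finset.sum_nonneg fun k _ => sq_nonneg _)]
    rw [hnorm]
    calc ∑ k : Fin (K₀ + 1), ‖Ll w k‖ ^ 2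
        = ∑ k : Fin (K₀ + 1), ‖(inner ℝ (ψ (k : ℕ)) (P K₀ (Tl w)) : ℝ)‖ ^ 2 := by
          refine Finset.sum_congr rfl fun k _ => ?_
          rw [hcoord k]
      _ ≤ ‖P K₀ (Tl w)‖ ^ 2 := hb
  -- antilipschitz constant from injectivity
  obtain ⟨c, -, hcanti⟩ := Ll.exists_antilipschitzWith (LinearMap.ker_eq_bot.mpr hLlinj)
  have hc : ∀ w : EuclideanSpace ℝ (Fin (J + 1)), ‖w‖ ≤ c * ‖Ll w‖ := by
    intro w
    have h1 := hcanti.le_mul_dist w 0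
    rwa [dist_zero_right, map_zero, dist_zero_right] at h1
  -- the bound on the minimizers
  set s : ℝ := Real.sqrt (Minf winf) with hs
  set R : ℝ := c * (‖F‖ + s) with hR
  have hMinf_nonneg : (0:ℝ) ≤ Minf winf := by rw [hMinf']; positivity
  have hbound : ∀ K : ℕ, K₀ ≤ K → ‖wK K‖ ≤ R := by
    intro K hK
    have h1 : MK K₀ (wK K) ≤ Minf winf := by
      calc MK K₀ (wK K) ≤ MK K (wK K) := hM_mono hK _
        _ ≤ MK K winf := hwKmin K hK winf
        _ ≤ Minf winf := hM_le_inf K winf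
    have h2 : ‖P K₀ (F - Tl (wK K))‖ ≤ s := by
      refine sq_le _ _ (Real.sqrt_nonneg _) ?_
      rw [hs, Real.sq_sqrt hMinf_nonneg]
      rw [hMK'] at h1
      exact h1
    have h3 : ‖P K₀ (Tl (wK K))‖ ≤ ‖F‖ + s := by
      have hdecomp : P K₀ (Tl (wK K)) = P K₀ F - P K₀ (F - Tl (wK K)) := by
        rw [← hPsub]
        congr 1
        abel
      rw [hdecomp]
      calc ‖P K₀ F - P K₀ (F - Tl (wK K))‖
          ≤ ‖P K₀ F‖ + ‖P K₀ (F - Tl (wK K))‖ := norm_sub_le _ _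
        _ ≤ ‖F‖ + s := by
            refine add_le_add ?_ h2
            exact sq_le _ _ (norm_nonneg _) (hProj_le K₀ F)
    calc ‖wK K‖ ≤ c * ‖Ll (wK K)‖ := hc _
      _ ≤ c * ‖P K₀ (Tl (wK K))‖ := by
          exact mul_le_mul_of_nonneg_left (hA _) (NNReal.coe_nonneg c)
      _ ≤ c * (‖F‖ + s) := mul_le_mul_of_nonneg_left h3 (NNReal.coe_nonneg c)
  -- main argument via subsequences
  refine Filter.tendsto_of_subseq_tendsto fun ns hns => ?_
  obtain ⟨N, hN⟩ := Filter.eventually_atTop.mp (hns.eventually (Filter.eventually_ge_atTop K₀))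
  set v : ℕ → EuclideanSpace ℝ (Fin (J + 1)) := fun n => wK (ns (n + N)) with hv
  have hvmem : ∀ n, v n ∈ Metric.closedBall (0 : EuclideanSpace ℝ (Fin (J + 1))) R := by
    intro n
    rw [Metric.mem_closedBall, dist_zero_right]
    exact hbound _ (hN _ (Nat.le_add_left N n))
  obtain ⟨wbar, -, φ, hφ, hφtend⟩ :=
    (isCompact_closedBall (0 : EuclideanSpace ℝ (Fin (J + 1))) R).tendsto_subseq hvmem
  have hkseq : Filter.Tendsto (fun n => ns (φ n + N)) Filter.atTop Filter.atTop :=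
    hns.comp ((Filter.tendsto_add_atTop_nat N).comp hφ.tendsto_atTop)
  -- each fixed M_{K'} at wbar is ≤ Minf winf
  have key : ∀ K' : ℕ, MK K' wbar ≤ Minf winf := by
    intro K'
    have htends : Filter.Tendsto (fun n => MK K' (v (φ n))) Filter.atTop
        (nhds (MK K' wbar)) := ((hMKcont K').tendsto wbar).comp hφtend
    refine le_of_tendsto htends ?_
    filter_upwards [hkseq.eventually (Filter.eventually_ge_atTop K'),
      hkseq.eventually (Filter.eventually_ge_atTop K₀)] with n hn hn0
    calc MK K' (v (φ n)) ≤ MK (ns (φ n + N)) (v (φ n)) := hM_mono hn _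
      _ ≤ MK (ns (φ n + N)) winf := hwKmin _ hn0 winf
      _ ≤ Minf winf := hM_le_inf _ winf
  have hwbar_le : Minf wbar ≤ Minf winf :=
    le_of_tendsto (hMtend wbar) (Filter.Eventually.of_forall key)
  have hwbar_eq : wbar = winf := hwinfuniq wbar (le_antisymm hwbar_le (hwinfmin wbar))
  exact ⟨fun n => φ n + N, hwbar_eq ▸ hφtend⟩
end

section
/- Let X ⊆ ℝ be a compact interval carrying a finite measure μ, let ν be Lebesgue measure on a compact interval [a,b], and let x : [a,b] → X be measurable such that c₁ • μ ≤ ν.map x ≤ c₂ • μ for constants 0 < c₁ ≤ c₂; consequently ‖h∘x‖_{L²(ν)} ≤ c₂^{1/2}‖h‖_{L²(μ)} and ‖h‖_{L²(μ)} ≤ c₁^{-1/2}‖h∘x‖_{L²(ν)} for all h ∈ L²(μ). Let f ∈ L²(μ), let 𝒫_J denote the real polynomials of degree at most J, and suppose q ∈ 𝒫_J minimizes the map p ↦ ‖(f − p)∘x‖_{L²(ν)} over 𝒫_J. Then for every p ∈ 𝒫_J: ‖q − p‖_{L²(μ)} ≤ (1 + (c₂/c₁)^{1/2}) · ‖f −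 p‖_{L²(μ)}. -/
set_option autoImplicit false

open MeasureTheory Set

/-- the chain of inequalities (r_bound) in Lemma 3.15: Let `X = [c,d]`
be a compact interval carrying a finite measure `μ`, `ν` Lebesgue measure on `[a,b]`,
and `x : [a,b] → X` measurable with `c₁ • μ ≤ ν.map x ≤ c₂ • μ` for `0 < c₁ ≤ c₂`
(so the composition operator `h ↦ h∘x` is bounded with bounded inverse).  If `q` is a
polynomial of degree ≤ J minimizing `p ↦ ‖(f − p)∘x‖_{L²(ν)}` over polynomials of
degree ≤ J, then for every polynomial `p` of degree ≤ J,
`‖q − p‖_{L²(μ)} ≤ (1 + (c₂/c₁)^{1/2}) ‖f − p‖_{L²(μ)}`. -/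
theorem best_composed_approximation_close
    (a b c d : ℝ) (hcd : c ≤ d)
    (μ : Measure ℝ) [IsFiniteMeasure μ] (hμX : μ (Icc c d)ᶜ = 0)
    (x : ℝ → ℝ) (hx : Measurable x) (hrange : ∀ t ∈ Icc a b, x t ∈ Icc c d)
    (c₁ c₂ : ℝ) (hc₁ : 0 < c₁) (hc₁₂ : c₁ ≤ c₂)
    (hdom_lower : ENNReal.ofReal c₁ • μ ≤ (volume.restrict (Icc a b)).map x)
    (hdom_upper : (volume.restrict (Icc a b)).map x ≤ ENNReal.ofReal c₂ • μ)
    (f : ℝ → ℝ) (hf : MemLp f 2 μ)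
    {J : ℕ} (q : Polynomial ℝ) (hq : q.natDegree ≤ J)
    (hqmin : ∀ p : Polynomial ℝ, p.natDegree ≤ J →
      eLpNorm (fun t => f (x t) - q.eval (x t)) 2 (volume.restrict (Icc a b)) ≤
        eLpNorm (fun t => f (x t) - p.eval (x t)) 2 (volume.restrict (Icc a b))) :
    ∀ p : Polynomial ℝ, p.natDegree ≤ J →
      eLpNorm (fun y => q.eval y - p.eval y) 2 μ ≤
        ENNReal.ofReal (1 + Real.sqrt (c₂ / c₁)) *
          eLpNorm (fun y => f y - p.eval y) 2 μ := by
  intro p hp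
  set ν : Measure ℝ := volume.restrict (Icc a b) with hνdef
  have hmapac : ν.map x ≪ μ := Measure.absolutelyContinuous_of_le_smul hdom_upper
  have hfm : AEMeasurable f μ := hf.aestronglyMeasurable.aemeasurable
  have hc₂ : (0:ℝ) < c₂ := hc₁.trans_le hc₁₂
  -- squared-norm integrals
  set I : Polynomial ℝ → ENNReal :=
    fun r => ∫⁻ y, (‖f y - r.eval y‖₊ : ENNReal) ^ (2:ℝ) ∂μ with hIdef
  set Iν : Polynomial ℝ → ENNReal :=
    fun r => ∫⁻ t, (‖f (x t) - r.eval (x t)‖₊ : ENNReal) ^ (2:ℝ) ∂ν with hIνdef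
  have hgm : ∀ r : Polynomial ℝ,
      AEMeasurable (fun y => (‖f y - r.eval y‖₊ : ENNReal) ^ (2:ℝ)) μ := fun r =>
    (ENNReal.continuous_rpow_const.measurable).comp_aemeasurable
      (hfm.sub r.continuous.measurable.aemeasurable).enorm
  -- change of variables
  have hmap : ∀ r : Polynomial ℝ,
      ∫⁻ y, (‖f y - r.eval y‖₊ : ENNReal) ^ (2:ℝ) ∂(ν.map x) = Iν r := fun r =>
    lintegral_map' ((hgm r).mono_ac hmapac) hx.aemeasurable
  have hupper : ∀ r : Polynomial ℝ, Iν r ≤ ENNReal.ofReal c₂ * I r := by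
    intro r
    rw [← hmap r]
    calc ∫⁻ y, (‖f y - r.eval y‖₊ : ENNReal) ^ (2:ℝ) ∂(ν.map x)
        ≤ ∫⁻ y, (‖f y - r.eval y‖₊ : ENNReal) ^ (2:ℝ) ∂(ENNReal.ofReal c₂ • μ) :=
          lintegral_mono' hdom_upper le_rfl
      _ = ENNReal.ofReal c₂ * I r := lintegral_smul_measure _ _
  have hlower : ∀ r : Polynomial ℝ, ENNReal.ofReal c₁ * I r ≤ Iν r := by
    intro r
    rw [← hmap r]
    calc ENNReal.ofReal c₁ * I r
        = ∫⁻ y, (‖f y - r.eval y‖₊ : ENNReal) ^ (2:ℝ) ∂(ENNReal.ofReal c₁ • μ) :=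
          by rw [lintegral_smul_measure]; rfl
      _ ≤ ∫⁻ y, (‖f y - r.eval y‖₊ : ENNReal) ^ (2:ℝ) ∂(ν.map x) :=
          lintegral_mono' hdom_lower le_rfl
  -- express eLpNorms via I, Iν
  have heLp : ∀ r : Polynomial ℝ,
      eLpNorm (fun y => f y - r.eval y) 2 μ = (I r) ^ (1/2 : ℝ) := by
    intro r
    rw [eLpNorm_eq_lintegral_rpow_enorm_toReal (by norm_num) (by norm_num)]
    norm_num [hIdef]
    rfl
  have heLpν : ∀ r : Polynomial ℝ,
      eLpNorm (fun t => f (x t) - r.eval (x t)) 2 ν = (Iν r) ^ (1/2 : ℝ) := by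
    intro r
    rw [eLpNorm_eq_lintegral_rpow_enorm_toReal (by norm_num) (by norm_num)]
    norm_num [hIνdef]
    rfl
  -- minimality at the integral level
  have hνqp : Iν q ≤ Iν p := by
    have h := hqmin p hp
    rw [heLpν q, heLpν p, ENNReal.rpow_le_rpow_iff (by norm_num : (0:ℝ) < 1/2)] at h
    exact h
  -- key bound : I q ≤ (c₂/c₁) * I p
  have hc₁ne : ENNReal.ofReal c₁ ≠ 0 := by
    simp [ENNReal.ofReal_eq_zero, not_le, hc₁]
  have hkey : I q ≤ ENNReal.ofReal (c₂ / c₁) * I p := by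
    have h1 : ENNReal.ofReal c₁ * I q ≤ ENNReal.ofReal c₂ * I p :=
      le_trans (hlower q) (le_trans hνqp (hupper p))
    have h2 : I q ≤ (ENNReal.ofReal c₁)⁻¹ * (ENNReal.ofReal c₂ * I p) := by
      calc I q = (ENNReal.ofReal c₁)⁻¹ * (ENNReal.ofReal c₁ * I q) := by
            rw [← mul_assoc, ENNReal.inv_mul_cancel hc₁ne ENNReal.ofReal_ne_top, one_mul]
        _ ≤ (ENNReal.ofReal c₁)⁻¹ * (ENNReal.ofReal c₂ * I p) := mul_le_mul_right h1 _
    rw [ENNReal.ofReal_div_of_pos hc₁, ENNReal.div_eq_inv_mul, mul_assoc]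
    exact h2
  -- translate to eLpNorm bound
  have hfq : eLpNorm (fun y => f y - q.eval y) 2 μ ≤
      ENNReal.ofReal (Real.sqrt (c₂ / c₁)) * eLpNorm (fun y => f y - p.eval y) 2 μ := by
    rw [heLp q, heLp p]
    calc (I q) ^ (1/2 : ℝ)
        ≤ (ENNReal.ofReal (c₂ / c₁) * I p) ^ (1/2 : ℝ) :=
          ENNReal.rpow_le_rpow hkey (by norm_num)
      _ = (ENNReal.ofReal (c₂ / c₁)) ^ (1/2 : ℝ) * (I p) ^ (1/2 : ℝ) :=
          ENNReal.mul_rpow_of_nonneg _ _ (by norm_num)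
      _ = ENNReal.ofReal (Real.sqrt (c₂ / c₁)) * (I p) ^ (1/2 : ℝ) := by
          rw [ENNReal.ofReal_rpow_of_nonneg (by positivity) (by norm_num),
            ← Real.sqrt_eq_rpow]
  -- triangle inequality
  have hfpm : AEStronglyMeasurable (fun y => f y - p.eval y) μ :=
    hf.aestronglyMeasurable.sub p.continuous.aestronglyMeasurable
  have hfqm : AEStronglyMeasurable (fun y => f y - q.eval y) μ :=
    hf.aestronglyMeasurable.sub q.continuous.aestronglyMeasurable
  have hfun : (fun y => q.eval y - p.eval y) =
      (fun y => f y - p.eval y) - (fun y => f y - q.eval y) := by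
    funext y; simp only [Pi.sub_apply]; ring
  have htri : eLpNorm (fun y => q.eval y - p.eval y) 2 μ ≤
      eLpNorm (fun y => f y - p.eval y) 2 μ + eLpNorm (fun y => f y - q.eval y) 2 μ := by
    rw [hfun]
    exact eLpNorm_sub_le hfpm hfqm one_le_two
  calc eLpNorm (fun y => q.eval y - p.eval y) 2 μ
      ≤ eLpNorm (fun y => f y - p.eval y) 2 μ + eLpNorm (fun y => f y - q.eval y) 2 μ := htri
    _ ≤ eLpNorm (fun y => f y - p.eval y) 2 μ +
        ENNReal.ofReal (Real.sqrt (c₂ / c₁)) * eLpNorm (fun y => f y - p.eval y) 2 μ :=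
          add_le_add_right hfq _
    _ = ENNReal.ofReal (1 + Real.sqrt (c₂ / c₁)) * eLpNorm (fun y => f y - p.eval y) 2 μ := by
        rw [ENNReal.ofReal_add zero_le_one (Real.sqrt_nonneg _), ENNReal.ofReal_one,
          add_mul, one_mul]
end

section
/- Let a ≤ α ≤ ξ ≤ β ≤ b be real numbers, f, p : ℝ → ℝ, and let x : [a,b] → ℝ be differentiable with x'(t) = f(x(t)) for all t ∈ [a,b], and x̂ : [α,β] → ℝ be differentiable with x̂'(t) = p(x̂(t)) for all t ∈ [α,β], with x(ξ) = x̂(ξ). Assume: (i) t ↦ f(x(t)) − p(x(t)) is measurable with ‖f∘x − p∘x‖_{L²([a,b])} ≤ ε for some ε > 0; (ii) p is Lipschitz with constant L on a set containing x([α,β]) ∪ x̂([α,β]); and (iii) (β − α)·L < 1. Then sup_{t∈[α,β]} |x(t) − x̂(t)| ≤ (β − α)^{1/2} · ε / (1 − (β − α)·L). -/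
set_option autoImplicit false

open MeasureTheory Set

/-- Proposition 3.18: Let `a ≤ α ≤ ξ ≤ β ≤ b`, let `x` solve `x' = f(x)`
on `[a,b]` and `x̂` solve `x̂' = p(x̂)` on `[α,β]` with `x(ξ) = x̂(ξ)`.  If
`‖f∘x − p∘x‖_{L²([a,b])} ≤ ε`, `p` is `L`-Lipschitz on a set containing
`x([α,β]) ∪ x̂([α,β])`, and `(β−α)·L < 1`, then
`sup_{t∈[α,β]} |x(t) − x̂(t)| ≤ (β−α)^{1/2} ε / (1 − (β−α)L)`. -/
theorem surrogate_solution_bound_lipschitz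
    (a b α β ξ : ℝ) (haα : a ≤ α) (hαξ : α ≤ ξ) (hξβ : ξ ≤ β) (hβb : β ≤ b)
    (f p : ℝ → ℝ) (x xhat : ℝ → ℝ)
    (hx : ∀ t ∈ Icc a b, HasDerivAt x (f (x t)) t)
    (hxhat : ∀ t ∈ Icc α β, HasDerivAt xhat (p (xhat t)) t)
    (hinit : x ξ = xhat ξ)
    (ε : ℝ) (hε : 0 < ε)
    (hmeas : Measurable fun s => f (x s) - p (x s))
    (hconsist : eLpNorm (fun s => f (x s) - p (x s)) 2 (volume.restrict (Icc a b)) ≤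
      ENNReal.ofReal ε)
    (L : ℝ) (s : Set ℝ) (hs : x '' Icc α β ∪ xhat '' Icc α β ⊆ s)
    (hLip : ∀ u ∈ s, ∀ v ∈ s, |p u - p v| ≤ L * |u - v|)
    (hsmall : (β - α) * L < 1) :
    ∀ t ∈ Icc α β,
      |x t - xhat t| ≤ Real.sqrt (β - α) * ε / (1 - (β - α) * L) := by
  have hαβ : α ≤ β := hαξ.trans hξβ
  have hab : a ≤ b := (haα.trans hαβ).trans hβb
  have hIcc : Icc α β ⊆ Icc a b := Icc_subset_Icc haα hβb
  set g : ℝ → ℝ := fun s => f (x s) - p (x s) with hg_def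
  -- finiteness of the restricted measure
  haveI : IsFiniteMeasure (volume.restrict (Icc a b)) :=
    ⟨by rw [Measure.restrict_apply_univ, Real.volume_Icc]; exact ENNReal.ofReal_lt_top⟩
  -- g is in L², hence L¹
  have hg2 : MemLp g 2 (volume.restrict (Icc a b)) :=
    ⟨hmeas.aestronglyMeasurable, lt_of_le_of_lt hconsist ENNReal.ofReal_lt_top⟩
  have hg1 : MemLp g 1 (volume.restrict (Icc a b)) :=
    hg2.mono_exponent (by norm_num)
  have hgint : IntegrableOn g (Icc a b) := memLp_one_iff_integrable.mp hg1
  have hgintαβ : IntegrableOn g (Icc α β) := hgint.mono_set hIcc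
  -- L² bound on [α,β]
  have hg2αβ : eLpNorm g 2 (volume.restrict (Icc α β)) ≤ ENNReal.ofReal ε :=
    le_trans (eLpNorm_mono_measure g (Measure.restrict_mono hIcc le_rfl)) hconsist
  -- L¹ bound via Cauchy–Schwarz
  have hA : ∫ u in Icc α β, |g u| ≤ Real.sqrt (β - α) * ε := by
    have h1 : eLpNorm g 1 (volume.restrict (Icc α β)) ≤
        eLpNorm g 2 (volume.restrict (Icc α β)) *
          (volume.restrict (Icc α β)) univ ^ (1 / (1 : ENNReal).toReal - 1 / (2 : ENNReal).toReal) := by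
      exact eLpNorm_le_eLpNorm_mul_rpow_measure_univ (by norm_num)
        (hmeas.aestronglyMeasurable)
    have hmuniv : (volume.restrict (Icc α β)) univ = ENNReal.ofReal (β - α) := by
      rw [Measure.restrict_apply_univ, Real.volume_Icc]
    have hexp : 1 / (1 : ENNReal).toReal - 1 / (2 : ENNReal).toReal = (1 / 2 : ℝ) := by norm_num
    rw [hmuniv, hexp] at h1
    have h2 : (ENNReal.ofReal (β - α)) ^ ((1 : ℝ) / 2) =
        ENNReal.ofReal (Real.sqrt (β - α)) := by
      rw [ENNReal.ofReal_rpow_of_nonneg (by linarith) (by norm_num), Real.sqrt_eq_rpow]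
    have h3 : eLpNorm g 1 (volume.restrict (Icc α β)) ≤
        ENNReal.ofReal (Real.sqrt (β - α) * ε) := by
      calc eLpNorm g 1 (volume.restrict (Icc α β))
          ≤ eLpNorm g 2 (volume.restrict (Icc α β)) * (ENNReal.ofReal (β - α)) ^ ((1:ℝ)/2) := h1
        _ ≤ ENNReal.ofReal ε * ENNReal.ofReal (Real.sqrt (β - α)) := by
            rw [h2]; exact mul_le_mul_left hg2αβ _
        _ = ENNReal.ofReal (Real.sqrt (β - α) * ε) := by
            rw [← ENNReal.ofReal_mul hε.le]; ring_nf
    have h4 : ∫ u in Icc α β, |g u| =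
        (eLpNorm g 1 (volume.restrict (Icc α β))).toReal := by
      rw [eLpNorm_one_eq_lintegral_enorm,
        ← integral_norm_eq_lintegral_enorm
          (hmeas.aestronglyMeasurable (μ := volume.restrict (Icc α β)))]
      simp [Real.norm_eq_abs]
    rw [h4]
    exact ENNReal.toReal_le_of_le_ofReal
      (mul_nonneg (Real.sqrt_nonneg _) hε.le) h3
  -- continuity facts
  have hxc : ContinuousOn x (Icc a b) :=
    fun t ht => (hx t ht).continuousAt.continuousWithinAt
  have hxhc : ContinuousOn xhat (Icc α β) :=
    fun t ht => (hxhat t ht).continuousAt.continuousWithinAt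
  have hxs : ∀ u ∈ Icc α β, x u ∈ s := fun u hu => hs (Or.inl ⟨u, hu, rfl⟩)
  have hxhs : ∀ u ∈ Icc α β, xhat u ∈ s := fun u hu => hs (Or.inr ⟨u, hu, rfl⟩)
  have hpc : ContinuousOn p s := by
    have : LipschitzOnWith (Real.toNNReal (max L 0)) p s := by
      rw [lipschitzOnWith_iff_dist_le_mul]
      intro u hu v hv
      rw [Real.dist_eq, Real.dist_eq, Real.coe_toNNReal _ (le_max_right L 0)]
      exact (hLip u hu v hv).trans
        (mul_le_mul_of_nonneg_right (le_max_left _ _) (abs_nonneg _))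
    exact this.continuousOn
  have hpxc : ContinuousOn (fun u => p (x u)) (Icc α β) :=
    hpc.comp (hxc.mono hIcc) hxs
  have hpxhc : ContinuousOn (fun u => p (xhat u)) (Icc α β) :=
    hpc.comp hxhc hxhs
  -- max point
  obtain ⟨t₀, ht₀, hmax⟩ := isCompact_Icc.exists_isMaxOn (nonempty_Icc.mpr hαβ)
    (((hxc.mono hIcc).sub hxhc).abs : ContinuousOn (fun t => |x t - xhat t|) (Icc α β))
  set M : ℝ := |x t₀ - xhat t₀| with hM_def
  have hmax' : ∀ u ∈ Icc α β, |x u - xhat u| ≤ M := fun u hu => hmax hu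
  have hLM : 0 ≤ L * M :=
    le_trans (abs_nonneg _) (hLip (x t₀) (hxs t₀ ht₀) (xhat t₀) (hxhs t₀ ht₀))
  -- pointwise bound for p∘x - p∘xhat
  have hpt : ∀ u ∈ Icc α β, |p (x u) - p (xhat u)| ≤ L * M := by
    intro u hu
    have h1 := hLip (x u) (hxs u hu) (xhat u) (hxhs u hu)
    rcases le_or_gt 0 L with hL | hL
    · exact h1.trans (mul_le_mul_of_nonneg_left (hmax' u hu) hL)
    · have h2 : L * |x u - xhat u| ≤ 0 :=
        mul_nonpos_of_nonpos_of_nonneg hL.le (abs_nonneg _)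
      linarith [abs_nonneg (p (x u) - p (xhat u))]
  -- main estimate
  have hbound : ∀ t ∈ Icc α β,
      |x t - xhat t| ≤ Real.sqrt (β - α) * ε + (β - α) * (L * M) := by
    intro t ht
    have huIcc : uIcc ξ t ⊆ Icc α β :=
      uIcc_subset_Icc ⟨hαξ, hξβ⟩ ht
    -- interval integrability
    have hgii : IntervalIntegrable g volume ξ t :=
      (hgintαβ.mono_set huIcc).intervalIntegrable
    have hpxii : IntervalIntegrable (fun u => p (x u)) volume ξ t :=
      (hpxc.mono huIcc).intervalIntegrable
    have hpxhii : IntervalIntegrable (fun u => p (xhat u)) volume ξ t :=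
      (hpxhc.mono huIcc).intervalIntegrable
    have hfxii : IntervalIntegrable (fun u => f (x u)) volume ξ t := by
      have heq : (fun u => f (x u)) = fun u => g u + p (x u) := by
        funext u; simp [hg_def]
      rw [heq]; exact hgii.add hpxii
    -- FTC
    have hftc1 : ∫ u in ξ..t, f (x u) = x t - x ξ :=
      intervalIntegral.integral_eq_sub_of_hasDerivAt
        (fun u hu => hx u (hIcc (huIcc hu))) hfxii
    have hftc2 : ∫ u in ξ..t, p (xhat u) = xhat t - xhat ξ :=
      intervalIntegral.integral_eq_sub_of_hasDerivAt
        (fun u hu => hxhat u (huIcc hu)) hpxhii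
    have key : x t - xhat t =
        (∫ u in ξ..t, g u) + ∫ u in ξ..t, (p (x u) - p (xhat u)) := by
      have h5 : (∫ u in ξ..t, g u) + ∫ u in ξ..t, (p (x u) - p (xhat u)) =
          (∫ u in ξ..t, f (x u)) - ∫ u in ξ..t, p (xhat u) := by
        rw [← intervalIntegral.integral_add hgii (hpxii.sub hpxhii),
          ← intervalIntegral.integral_sub hfxii hpxhii]
        congr 1; funext u; simp [hg_def]
      rw [h5, hftc1, hftc2, hinit]; ring
    have hsub : Set.uIoc ξ t ⊆ Icc α β := Set.uIoc_subset_uIcc.trans huIcc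
    -- bound the first integral
    have hb1 : |∫ u in ξ..t, g u| ≤ Real.sqrt (β - α) * ε := by
      calc |∫ u in ξ..t, g u| ≤ ∫ u in Set.uIoc ξ t, |g u| := by
            simpa [Real.norm_eq_abs] using
              intervalIntegral.norm_integral_le_integral_norm_uIoc (f := g) (a := ξ) (b := t)
                (μ := volume)
        _ ≤ ∫ u in Icc α β, |g u| := by
            apply setIntegral_mono_set hgintαβ.abs
              (Filter.Eventually.of_forall fun u => abs_nonneg _)
              (HasSubset.Subset.eventuallyLE hsub)
        _ ≤ Real.sqrt (β - α) * ε := hA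
    -- bound the second integral
    have hb2 : |∫ u in ξ..t, (p (x u) - p (xhat u))| ≤ (β - α) * (L * M) := by
      have hdiffint : IntegrableOn (fun u => |p (x u) - p (xhat u)|) (Icc α β) :=
        ((hpxc.sub hpxhc).abs).integrableOn_compact isCompact_Icc
      calc |∫ u in ξ..t, (p (x u) - p (xhat u))|
          ≤ ∫ u in Set.uIoc ξ t, |p (x u) - p (xhat u)| := by
            simpa [Real.norm_eq_abs] using
              intervalIntegral.norm_integral_le_integral_norm_uIoc
                (f := fun u => p (x u) - p (xhat u)) (a := ξ) (b := t) (μ := volume)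
        _ ≤ ∫ u in Icc α β, |p (x u) - p (xhat u)| :=
            setIntegral_mono_set hdiffint
              (Filter.Eventually.of_forall fun u => abs_nonneg _)
              (HasSubset.Subset.eventuallyLE hsub)
        _ ≤ ∫ _u in Icc α β, (L * M) :=
            setIntegral_mono_on hdiffint (integrableOn_const
              (by rw [Real.volume_Icc]; exact ENNReal.ofReal_ne_top))
              measurableSet_Icc hpt
        _ = (β - α) * (L * M) := by
            rw [setIntegral_const, Real.volume_real_Icc_of_le hαβ, smul_eq_mul]
        _ ≤ (β - α) * (L * M) := le_rfl
    calc |x t - xhat t| ≤ |∫ u in ξ..t, g u| + |∫ u in ξ..t, (p (x u) - p (xhat u))| := by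
          rw [key]; exact abs_add_le _ _
      _ ≤ Real.sqrt (β - α) * ε + (β - α) * (L * M) := add_le_add hb1 hb2
  -- conclude
  have hden : 0 < 1 - (β - α) * L := by linarith
  have hM : M ≤ Real.sqrt (β - α) * ε / (1 - (β - α) * L) := by
    have h6 := hbound t₀ ht₀
    rw [le_div_iff₀ hden]
    nlinarith [h6]
  intro t ht
  exact (hmax' t ht).trans hM
end

section
/- Let a ≤ α ≤ ξ ≤ β ≤ b, N ∈ ℕ, f, p : ℝ^N → ℝ^N, and let x : [a,b] → ℝ^N be differentiable with x'(t) = f(x(t)) for all t ∈ [a,b], and x̂ : [α,β] → ℝ^N be differentiable with x̂'(t) = p(x̂(t)) for all t ∈ [α,β], with x(ξ) = x̂(ξ). Assume: (i) for every i ∈ {1,…,N}, t ↦ f_i(x(t)) − p_i(x(t)) is measurable with ‖f_i∘x − p_i∘x‖_{L²([a,b])} ≤ ε; (ii) for every i, the component p_i satisfies |p_i(u) − p_i(v)| ≤ L · max_{1≤j≤N}|u_j − v_j| for all u, v in a set containing x([α,β]) ∪ x̂([α,β]); and (iii) (β − α)·L < 1. Then max_{1≤i≤N} sup_{t∈[α,β]}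 |x_i(t) − x̂_i(t)| ≤ (β − α)^{1/2} · ε / (1 − (β − α)·L). -/
set_option autoImplicit false

open MeasureTheory Set
open scoped ENNReal

/-- Proposition 4.3: system version of the Lipschitz solution-error bound.
Let `a ≤ α ≤ ξ ≤ β ≤ b`, let `x` solve `x' = f(x)` on `[a,b]` and `x̂` solve
`x̂' = p(x̂)` on `[α,β]` with `x(ξ) = x̂(ξ)`.  Assume each component consistency error
satisfies `‖f_i∘x − p_i∘x‖_{L²([a,b])} ≤ ε`, each `p_i` satisfies
`|p_i(u) − p_i(v)| ≤ L · max_j |u_j − v_j|` on a set containing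
`x([α,β]) ∪ x̂([α,β])`, and `(β−α)·L < 1`.  Then for every component `i` and every
`t ∈ [α,β]`, `|x_i(t) − x̂_i(t)| ≤ (β−α)^{1/2} ε / (1 − (β−α)L)`.
(Here `(Fin N → ℝ)` carries the sup norm, so `‖u − v‖ = max_j |u_j − v_j|`.) -/
theorem surrogate_solution_bound_lipschitz_system
    (a b α β ξ : ℝ) (haα : a ≤ α) (hαξ : α ≤ ξ) (hξβ : ξ ≤ β) (hβb : β ≤ b)
    (N : ℕ) (f p : (Fin N → ℝ) → (Fin N → ℝ)) (x xhat : ℝ → (Fin N → ℝ))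
    (hx : ∀ t ∈ Icc a b, HasDerivAt x (f (x t)) t)
    (hxhat : ∀ t ∈ Icc α β, HasDerivAt xhat (p (xhat t)) t)
    (hinit : x ξ = xhat ξ)
    (ε : ℝ) (hε : 0 < ε)
    (hmeas : ∀ i : Fin N, Measurable fun s => f (x s) i - p (x s) i)
    (hconsist : ∀ i : Fin N,
      eLpNorm (fun s => f (x s) i - p (x s) i) 2 (volume.restrict (Icc a b)) ≤
        ENNReal.ofReal ε)
    (L : ℝ) (s : Set (Fin N → ℝ)) (hs : x '' Icc α β ∪ xhat '' Icc α β ⊆ s)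
    (hLip : ∀ i : Fin N, ∀ u ∈ s, ∀ v ∈ s, |p u i - p v i| ≤ L * ‖u - v‖)
    (hsmall : (β - α) * L < 1) :
    ∀ i : Fin N, ∀ t ∈ Icc α β,
      |x t i - xhat t i| ≤ Real.sqrt (β - α) * ε / (1 - (β - α) * L) := by
  have hαβ : α ≤ β := hαξ.trans hξβ
  have hD : 0 < 1 - (β - α) * L := sub_pos.mpr hsmall
  have hsub : Icc α β ⊆ Icc a b := Icc_subset_Icc haα hβb
  have hRHS : 0 ≤ Real.sqrt (β - α) * ε / (1 - (β - α) * L) :=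
    div_nonneg (mul_nonneg (Real.sqrt_nonneg _) hε.le) hD.le
  by_cases hL : 0 ≤ L
  swap
  · push_neg at hL
    intro i t ht
    have hxt : x t ∈ s := hs (Or.inl ⟨t, ht, rfl⟩)
    have hxh : xhat t ∈ s := hs (Or.inr ⟨t, ht, rfl⟩)
    have h1 := hLip i (x t) hxt (xhat t) hxh
    have hnv : x t - xhat t = 0 := by
      by_contra h
      have hpos : 0 < ‖x t - xhat t‖ := norm_pos_iff.mpr h
      nlinarith [abs_nonneg (p (x t) i - p (xhat t) i)]
    have : x t = xhat t := sub_eq_zero.mp hnv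
    rw [this, sub_self, abs_zero]
    exact hRHS
  -- main case
  have fact1 : Fact (volume (Icc a b) < ⊤) := ⟨measure_Icc_lt_top⟩
  have fact2 : Fact (volume (Icc α β) < ⊤) := ⟨measure_Icc_lt_top⟩
  have hcx : ContinuousOn x (Icc α β) := fun t ht =>
    ((hx t (hsub ht)).continuousAt).continuousWithinAt
  have hcxh : ContinuousOn xhat (Icc α β) := fun t ht =>
    ((hxhat t ht).continuousAt).continuousWithinAt
  obtain ⟨t₀, ht₀, hmax⟩ := isCompact_Icc.exists_isMaxOn (nonempty_Icc.mpr hαβ)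
    ((hcx.sub hcxh).norm)
  set M : ℝ := ‖x t₀ - xhat t₀‖ with hMdef
  have hM0 : 0 ≤ M := norm_nonneg _
  have key : ∀ i : Fin N, ∀ t ∈ Icc α β,
      |x t i - xhat t i| ≤ Real.sqrt (β - α) * ε + (β - α) * (L * M) := by
    intro i t ht
    set e : ℝ → ℝ := fun σ => f (x σ) i - p (x σ) i with he
    set r : ℝ → ℝ := fun σ => p (x σ) i - p (xhat σ) i with hr
    have hrb : ∀ σ ∈ Icc α β, |r σ| ≤ L * M := by
      intro σ hσ
      have h1 : x σ ∈ s := hs (Or.inl ⟨σ, hσ, rfl⟩)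
      have h2 : xhat σ ∈ s := hs (Or.inr ⟨σ, hσ, rfl⟩)
      have h3 := hLip i (x σ) h1 (xhat σ) h2
      have h4 : ‖x σ - xhat σ‖ ≤ M := hmax hσ
      calc |r σ| ≤ L * ‖x σ - xhat σ‖ := h3
        _ ≤ L * M := by nlinarith
    set Q : ℝ → ℝ := fun σ => deriv (fun u => x u i) σ - deriv (fun u => xhat u i) σ with hQ
    have hQm : Measurable Q := (measurable_deriv _).sub (measurable_deriv _)
    have hQeq : ∀ σ ∈ Icc α β, Q σ = f (x σ) i - p (xhat σ) i := by
      intro σ hσ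
      have h1 := (hasDerivAt_pi.mp (hx σ (hsub hσ)) i).deriv
      have h2 := (hasDerivAt_pi.mp (hxhat σ hσ) i).deriv
      simp only [hQ, h1, h2]
    have hrm : AEStronglyMeasurable r (volume.restrict (Icc α β)) := by
      refine ((hQm.sub (hmeas i)).aestronglyMeasurable).congr ?_
      filter_upwards [ae_restrict_mem measurableSet_Icc] with σ hσ
      have := hQeq σ hσ
      simp only [Pi.sub_apply, this, he, hr]
      ring
    have hri : IntegrableOn r (Icc α β) volume := by
      refine Integrable.mono' (integrable_const (L * M)) hrm ?_
      filter_upwards [ae_restrict_mem measurableSet_Icc] with σ hσ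
      simpa using hrb σ hσ
    have heme : MemLp e 2 (volume.restrict (Icc a b)) :=
      ⟨(hmeas i).aestronglyMeasurable, lt_of_le_of_lt (hconsist i) ENNReal.ofReal_lt_top⟩
    have hei : IntegrableOn e (Icc a b) volume := heme.integrable one_le_two
    have hei' : IntegrableOn e (Icc α β) volume := hei.mono_set hsub
    have hqsplit : (fun σ => f (x σ) i - p (xhat σ) i) = fun σ => e σ + r σ := by
      funext σ; simp only [he, hr]; ring
    have hq : IntegrableOn (fun σ => f (x σ) i - p (xhat σ) i) (Icc α β) volume := by
      rw [hqsplit]; exact hei'.add hri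
    have hsubt : uIcc ξ t ⊆ Icc α β := uIcc_subset_Icc ⟨hαξ, hξβ⟩ ht
    have hftc : ∫ σ in ξ..t, (f (x σ) i - p (xhat σ) i) =
        (x t i - xhat t i) - (x ξ i - xhat ξ i) := by
      apply intervalIntegral.integral_eq_sub_of_hasDerivAt
      · intro σ hσ
        exact ((hasDerivAt_pi.mp (hx σ (hsub (hsubt hσ))) i)).sub
          ((hasDerivAt_pi.mp (hxhat σ (hsubt hσ)) i))
      · exact (hq.mono_set hsubt).intervalIntegrable
    have hinit' : x ξ i - xhat ξ i = 0 := by rw [hinit]; ring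
    have hrep : x t i - xhat t i = ∫ σ in ξ..t, (f (x σ) i - p (xhat σ) i) := by
      rw [hftc, hinit']; ring
    have hb1 : |x t i - xhat t i| ≤ ∫ σ in Icc α β, |f (x σ) i - p (xhat σ) i| := by
      rw [hrep]
      calc |∫ σ in ξ..t, (f (x σ) i - p (xhat σ) i)|
          = ‖∫ σ in ξ..t, (f (x σ) i - p (xhat σ) i)‖ := (Real.norm_eq_abs _).symm
        _ ≤ ∫ σ in uIoc ξ t, ‖f (x σ) i - p (xhat σ) i‖ :=
            intervalIntegral.norm_integral_le_integral_norm_uIoc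
        _ = ∫ σ in uIoc ξ t, |f (x σ) i - p (xhat σ) i| := by
            simp only [Real.norm_eq_abs]
        _ ≤ ∫ σ in Icc α β, |f (x σ) i - p (xhat σ) i| := by
            refine setIntegral_mono_set hq.abs ?_ ?_
            · exact Filter.Eventually.of_forall fun _ => abs_nonneg _
            · exact HasSubset.Subset.eventuallyLE (uIoc_subset_uIcc.trans hsubt)
    have hb2 : ∫ σ in Icc α β, |f (x σ) i - p (xhat σ) i| ≤
        (∫ σ in Icc α β, |e σ|) + (β - α) * (L * M) := by
      have hmono : ∫ σ in Icc α β, |f (x σ) i - p (xhat σ) i| ≤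
          ∫ σ in Icc α β, (|e σ| + L * M) := by
        refine setIntegral_mono_on hq.abs (hei'.abs.add (integrable_const _))
          measurableSet_Icc ?_
        intro σ hσ
        have : f (x σ) i - p (xhat σ) i = e σ + r σ := by simp only [he, hr]; ring
        rw [this]
        calc |e σ + r σ| ≤ |e σ| + |r σ| := abs_add_le _ _
          _ ≤ |e σ| + L * M := by linarith [hrb σ hσ]
      rw [integral_add hei'.abs (integrable_const _), setIntegral_const,
        Real.volume_real_Icc_of_le hαβ] at hmono
      simpa using hmono
    have hCS : ∫ σ in Icc α β, |e σ| ≤ Real.sqrt (β - α) * ε := by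
      have h1 : ENNReal.ofReal (∫ σ in Icc α β, |e σ|) =
          eLpNorm e 1 (volume.restrict (Icc α β)) := by
        rw [eLpNorm_one_eq_lintegral_enorm,
          ← ofReal_integral_norm_eq_lintegral_enorm hei']
        simp [Real.norm_eq_abs]
      have h2 := eLpNorm_le_eLpNorm_mul_rpow_measure_univ (p := 1) (q := 2)
        one_le_two ((hmeas i).aestronglyMeasurable (μ := volume.restrict (Icc α β)))
      have h3 : eLpNorm e 2 (volume.restrict (Icc α β)) ≤ ENNReal.ofReal ε :=
        le_trans (eLpNorm_mono_measure e (Measure.restrict_mono hsub le_rfl)) (hconsist i)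
      have h4 : (volume.restrict (Icc α β)) Set.univ = ENNReal.ofReal (β - α) := by
        rw [Measure.restrict_apply_univ, Real.volume_Icc]
      have h5 : (1 / ENNReal.toReal 1 - 1 / ENNReal.toReal 2) = (1/2 : ℝ) := by norm_num
      rw [h4, h5] at h2
      have h6 : eLpNorm e 1 (volume.restrict (Icc α β)) ≤
          ENNReal.ofReal ε * ENNReal.ofReal ((β - α) ^ (1/2 : ℝ)) := by
        refine le_trans h2 ?_
        rw [ENNReal.ofReal_rpow_of_nonneg (by linarith) (by norm_num)]
        exact mul_le_mul_left h3 _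
      have h7 : ENNReal.ofReal (∫ σ in Icc α β, |e σ|) ≤
          ENNReal.ofReal (ε * (β - α) ^ (1/2 : ℝ)) := by
        rw [h1, ENNReal.ofReal_mul hε.le]
        exact h6
      have h8 := (ENNReal.ofReal_le_ofReal_iff
        (mul_nonneg hε.le (Real.rpow_nonneg (by linarith) _))).mp h7
      calc ∫ σ in Icc α β, |e σ| ≤ ε * (β - α) ^ (1/2 : ℝ) := h8
        _ = Real.sqrt (β - α) * ε := by rw [← Real.sqrt_eq_rpow]; ring
    calc |x t i - xhat t i| ≤ (∫ σ in Icc α β, |e σ|) + (β - α) * (L * M) :=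
        le_trans hb1 hb2
      _ ≤ Real.sqrt (β - α) * ε + (β - α) * (L * M) := by linarith
  -- finish
  have hC : 0 ≤ Real.sqrt (β - α) * ε + (β - α) * (L * M) :=
    add_nonneg (mul_nonneg (Real.sqrt_nonneg _) hε.le)
      (mul_nonneg (by linarith) (mul_nonneg hL hM0))
  have hMle : M ≤ Real.sqrt (β - α) * ε + (β - α) * (L * M) := by
    rw [hMdef]
    refine (pi_norm_le_iff_of_nonneg hC).mpr fun i => ?_
    have := key i t₀ ht₀
    simpa [Real.norm_eq_abs] using this
  have hMfin : M ≤ Real.sqrt (β - α) * ε / (1 - (β - α) * L) := by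
    rw [le_div_iff₀ hD]
    nlinarith
  intro i t ht
  have h1 : |x t i - xhat t i| ≤ ‖x t - xhat t‖ := by
    simpa [Real.norm_eq_abs] using norm_le_pi_norm (x t - xhat t) i
  exact le_trans (le_trans h1 (hmax ht)) hMfin
end
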